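/- arXiv:2510.18048 — 7 statements merged into one kernel-verified Lean document; each statement's English description precedes it below -/
import Mathlib

section
/- For every integer n ≥ 3, there exists a graph homomorphism φ from the sunlet graph S¹_{n²} to the toroidal grid C_n □ C_n such that (i) the induced map on edge sets is a bijection, (ii) every vertex of C_n □ C_n has exactly two φ-preimages, and (iii) φ is injective on the set of cycle vertices of the sunlet, so the image of the sunlet's cycle Z(S¹_{n²}) is a Hamiltonian cycle of C_n □ C_n. -/
/-- The sunlet graph `S¹_p` on vertex set `ZMod p ⊕ ZMod p`: `inl k` (a cycle vertex)
is adjacent to `inl (k+1)`, and `inl k` is adjacent to the leaf `inr k`. -/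
def sunlet (p : ℕ) : SimpleGraph (ZMod p ⊕ ZMod p) :=
  SimpleGraph.fromRel (fun u w =>
    match u, w with
    | Sum.inl a, Sum.inl b => b = a + 1
    | Sum.inl a, Sum.inr b => a = b
    | _, _ => False)

/-- The toroidal grid `C_n □ C_n` on vertex set `ZMod n × ZMod n`. -/
def torGrid (n : ℕ) : SimpleGraph (ZMod n × ZMod n) :=
  SimpleGraph.fromRel (fun u w =>
    (u.1 = w.1 ∧ w.2 = u.2 + 1) ∨ (u.2 = w.2 ∧ w.1 = u.1 + 1))

namespace SunletAux

variable {n : ℕ}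

/-- The Hamiltonian-cycle parametrization: `k = n*q + r ↦ (q, r - q)`. -/
def fmap (n : ℕ) (k : ZMod (n ^ 2)) : ZMod n × ZMod n :=
  (((k.val / n : ℕ) : ZMod n), ((k.val % n : ℕ) : ZMod n) - ((k.val / n : ℕ) : ZMod n))

def finv (n : ℕ) (v : ZMod n × ZMod n) : ZMod (n ^ 2) :=
  ((n * v.1.val + (v.1 + v.2).val : ℕ) : ZMod (n ^ 2))

def gmap (n : ℕ) (v : ZMod n × ZMod n) : ZMod n × ZMod n :=
  if v.1 + v.2 = -1 then (v.1, v.2 + 1) else (v.1 + 1, v.2)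

def ginv (n : ℕ) (v : ZMod n × ZMod n) : ZMod n × ZMod n :=
  if v.1 + v.2 = 0 then (v.1, v.2 - 1) else (v.1 - 1, v.2)

lemma one_ne (hn : 3 ≤ n) : (1 : ZMod n) ≠ 0 := by
  intro h
  rw [show (1 : ZMod n) = ((1 : ℕ) : ZMod n) by norm_num,
    ZMod.natCast_eq_zero_iff] at h
  have := Nat.le_of_dvd one_pos h
  omega

lemma two_ne (hn : 3 ≤ n) : (2 : ZMod n) ≠ 0 := by
  intro h
  rw [show (2 : ZMod n) = ((2 : ℕ) : ZMod n) by norm_num,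
    ZMod.natCast_eq_zero_iff] at h
  have := Nat.le_of_dvd two_pos h
  omega

lemma one_ne' (hn : 3 ≤ n) : (1 : ZMod (n ^ 2)) ≠ 0 :=
  one_ne (by nlinarith)

lemma neg_one_cast (hn : 3 ≤ n) : ((n - 1 : ℕ) : ZMod n) = -1 := by
  have h : (((n - 1) + 1 : ℕ) : ZMod n) = 0 := by
    rw [show (n - 1) + 1 = n from by omega, ZMod.natCast_self]
  push_cast at h
  linear_combination h

lemma finv_fmap (hn : 3 ≤ n) (k : ZMod (n ^ 2)) : finv n (fmap n k) = k := by
  haveI : NeZero n := ⟨by omega⟩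
  haveI : NeZero (n ^ 2) := ⟨by positivity⟩
  have hv : k.val < n ^ 2 := ZMod.val_lt k
  have hq : k.val / n < n := Nat.div_lt_of_lt_mul (by rwa [← pow_two])
  have hr : k.val % n < n := Nat.mod_lt _ (by omega)
  show ((n * (((k.val / n : ℕ) : ZMod n)).val +
      ((((k.val / n : ℕ) : ZMod n)) + (((k.val % n : ℕ) : ZMod n) - ((k.val / n : ℕ) : ZMod n))).val : ℕ)
      : ZMod (n ^ 2)) = k
  rw [show (((k.val / n : ℕ) : ZMod n)) + (((k.val % n : ℕ) : ZMod n) - ((k.val / n : ℕ) : ZMod n))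
      = ((k.val % n : ℕ) : ZMod n) by ring]
  rw [ZMod.val_cast_of_lt hq, ZMod.val_cast_of_lt hr, Nat.div_add_mod]
  exact ZMod.natCast_zmod_val k

lemma fmap_finv (hn : 3 ≤ n) (v : ZMod n × ZMod n) : fmap n (finv n v) = v := by
  haveI : NeZero n := ⟨by omega⟩
  haveI : NeZero (n ^ 2) := ⟨by positivity⟩
  have ha : v.1.val < n := ZMod.val_lt _
  have hc : (v.1 + v.2).val < n := ZMod.val_lt _
  have hk : n * v.1.val + (v.1 + v.2).val < n ^ 2 := by nlinarith
  have hval : (finv n v).val = n * v.1.val + (v.1 + v.2).val := by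
    unfold finv; exact ZMod.val_cast_of_lt hk
  have h1 : (finv n v).val / n = v.1.val := by
    rw [hval, Nat.mul_add_div (by omega), Nat.div_eq_of_lt hc, add_zero]
  have h2 : (finv n v).val % n = (v.1 + v.2).val := by
    rw [hval, Nat.mul_add_mod, Nat.mod_eq_of_lt hc]
  unfold fmap
  rw [h1, h2, ZMod.natCast_zmod_val, ZMod.natCast_zmod_val]
  rw [show v.1 + v.2 - v.1 = v.2 by ring]



lemma ginv_gmap (hn : 3 ≤ n) (v : ZMod n × ZMod n) : ginv n (gmap n v) = v := by
  unfold gmap ginv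
  by_cases h : v.1 + v.2 = -1
  · rw [if_pos h]
    have h2 : (v.1, v.2 + 1).1 + (v.1, v.2 + 1).2 = 0 := by
      show v.1 + (v.2 + 1) = 0
      linear_combination h
    rw [if_pos h2]
    show (v.1, v.2 + 1 - 1) = v
    rw [add_sub_cancel_right]
  · rw [if_neg h]
    have h2 : ¬((v.1 + 1, v.2).1 + (v.1 + 1, v.2).2 = 0) := by
      show ¬(v.1 + 1 + v.2 = 0)
      intro hc
      exact h (by linear_combination hc)
    rw [if_neg h2]
    show (v.1 + 1 - 1, v.2) = v
    rw [add_sub_cancel_right]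

lemma gmap_ginv (hn : 3 ≤ n) (v : ZMod n × ZMod n) : gmap n (ginv n v) = v := by
  unfold gmap ginv
  by_cases h : v.1 + v.2 = 0
  · rw [if_pos h]
    have h2 : (v.1, v.2 - 1).1 + (v.1, v.2 - 1).2 = -1 := by
      show v.1 + (v.2 - 1) = -1
      linear_combination h
    rw [if_pos h2]
    show (v.1, v.2 - 1 + 1) = v
    rw [sub_add_cancel]
  · rw [if_neg h]
    have h2 : ¬((v.1 - 1, v.2).1 + (v.1 - 1, v.2).2 = -1) := by
      show ¬(v.1 - 1 + v.2 = -1)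
      intro hc
      exact h (by linear_combination hc)
    rw [if_neg h2]
    show (v.1 - 1 + 1, v.2) = v
    rw [sub_add_cancel]

lemma fmap_step (hn : 3 ≤ n) (k : ZMod (n ^ 2)) :
    fmap n (k + 1) =
      if (fmap n k).1 + (fmap n k).2 = -1
      then ((fmap n k).1 + 1, (fmap n k).2)
      else ((fmap n k).1, (fmap n k).2 + 1) := by
  haveI : NeZero n := ⟨by omega⟩
  haveI : NeZero (n ^ 2) := ⟨by positivity⟩
  have hv : k.val < n ^ 2 := ZMod.val_lt k
  set q := k.val / n with hqdef
  set r := k.val % n with hrdef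
  have hq : q < n := Nat.div_lt_of_lt_mul (by rwa [← pow_two])
  have hr : r < n := Nat.mod_lt _ (by omega)
  have hdm : n * q + r = k.val := Nat.div_add_mod k.val n
  have hfk : fmap n k = (((q : ℕ) : ZMod n), ((r : ℕ) : ZMod n) - ((q : ℕ) : ZMod n)) := rfl
  have hcond : ((fmap n k).1 + (fmap n k).2 = -1) ↔ r = n - 1 := by
    rw [hfk]
    constructor
    · intro h
      have h2 : ((r : ℕ) : ZMod n) = ((n - 1 : ℕ) : ZMod n) := by
        rw [neg_one_cast hn]; linear_combination h
      have h3 := congrArg ZMod.val h2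
      rwa [ZMod.val_cast_of_lt hr, ZMod.val_cast_of_lt (by omega)] at h3
    · intro h
      show ((q : ℕ) : ZMod n) + (((r : ℕ) : ZMod n) - ((q : ℕ) : ZMod n)) = -1
      rw [h]
      linear_combination neg_one_cast hn
  by_cases hrc : r = n - 1
  · rw [if_pos (hcond.mpr hrc)]
    by_cases hm : k.val = n ^ 2 - 1
    · -- wrap-around
      have hexp : n * (n - 1) + (n - 1) = n ^ 2 - 1 := by
        have h1 : 1 ≤ n := by omega
        have h2 : 1 ≤ n ^ 2 := Nat.one_le_pow _ _ (by omega)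
        zify [h1, h2]
        ring
      have hqval : q = n - 1 := by
        rw [hqdef, hm, ← hexp, Nat.mul_add_div (by omega), Nat.div_eq_of_lt (by omega), add_zero]
      have hk1 : k + 1 = 0 := by
        have h4 : k + 1 = ((k.val + 1 : ℕ) : ZMod (n ^ 2)) := by
          rw [Nat.cast_add, Nat.cast_one, ZMod.natCast_zmod_val]
        rw [h4, hm,
          show n ^ 2 - 1 + 1 = n ^ 2 from by
            have h5 : 1 ≤ n ^ 2 := Nat.one_le_pow _ _ (by omega); omega,
          ZMod.natCast_self]
      have h0 : fmap n (k + 1) = (0, 0) := by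
        rw [hk1]
        unfold fmap
        rw [ZMod.val_zero, Nat.zero_div, Nat.zero_mod]
        norm_num
      rw [h0, hfk, hqval, hrc]
      refine Prod.ext_iff.mpr ⟨?_, by ring⟩
      show (0 : ZMod n) = ((n - 1 : ℕ) : ZMod n) + 1
      rw [neg_one_cast hn]
      ring
    · -- r = n-1, no wrap
      have hlt : k.val + 1 < n ^ 2 := by omega
      have hk1v : (k + 1).val = k.val + 1 := by
        have h4 : k + 1 = ((k.val + 1 : ℕ) : ZMod (n ^ 2)) := by
          rw [Nat.cast_add, Nat.cast_one, ZMod.natCast_zmod_val]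
        rw [h4, ZMod.val_cast_of_lt hlt]
      have h6 : k.val + 1 = n * (q + 1) := by
        rw [Nat.mul_add, mul_one, ← hdm]
        have h7 : r + 1 = n := by omega
        omega
      have hdiv : (k + 1).val / n = q + 1 := by
        rw [hk1v, h6, Nat.mul_div_cancel_left _ (by omega : 0 < n)]
      have hmod : (k + 1).val % n = 0 := by
        rw [hk1v, h6, Nat.mul_mod_right]
      show (((((k+1).val / n : ℕ)) : ZMod n), (((k+1).val % n : ℕ) : ZMod n) - (((k+1).val / n : ℕ) : ZMod n)) = _
      rw [hdiv, hmod, hfk, hrc]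
      refine Prod.ext_iff.mpr ⟨by push_cast; ring, ?_⟩
      show ((0 : ℕ) : ZMod n) - ((q + 1 : ℕ) : ZMod n) = ((n - 1 : ℕ) : ZMod n) - ((q : ℕ) : ZMod n)
      rw [neg_one_cast hn]
      push_cast
      ring
  · -- r < n - 1
    rw [if_neg (fun h => hrc (hcond.mp h))]
    have hr2 : r + 1 < n := by omega
    have h6 : k.val + 1 = n * q + (r + 1) := by omega
    have hlt : k.val + 1 < n ^ 2 := by
      have hnn : n ^ 2 = n * n := sq n
      have hmul : n * (q + 1) ≤ n * n := Nat.mul_le_mul_left n (by omega : q + 1 ≤ n)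
      have h5 : n * (q + 1) = n * q + n := by ring
      linarith
    have hk1v : (k + 1).val = k.val + 1 := by
      have h4 : k + 1 = ((k.val + 1 : ℕ) : ZMod (n ^ 2)) := by
        rw [Nat.cast_add, Nat.cast_one, ZMod.natCast_zmod_val]
      rw [h4, ZMod.val_cast_of_lt hlt]
    have hdiv : (k + 1).val / n = q := by
      rw [hk1v, h6, Nat.mul_add_div (by omega), Nat.div_eq_of_lt hr2, add_zero]
    have hmod : (k + 1).val % n = r + 1 := by
      rw [hk1v, h6, Nat.mul_add_mod, Nat.mod_eq_of_lt hr2]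
    show (((((k+1).val / n : ℕ)) : ZMod n), (((k+1).val % n : ℕ) : ZMod n) - (((k+1).val / n : ℕ) : ZMod n)) = _
    rw [hdiv, hmod, hfk]
    refine Prod.ext_iff.mpr ⟨rfl, ?_⟩
    show ((r + 1 : ℕ) : ZMod n) - ((q : ℕ) : ZMod n) = (((r : ℕ) : ZMod n) - ((q : ℕ) : ZMod n)) + 1
    push_cast
    ring

-- edge-type lemmas
lemma horiz_eq (hn : 3 ≤ n) {v w : ZMod n × ZMod n}
    (h : s(v, (v.1, v.2 + 1)) = s(w, (w.1, w.2 + 1))) : v = w := by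
  obtain ⟨a, b⟩ := v
  obtain ⟨c, d⟩ := w
  rw [Sym2.eq_iff] at h
  simp only [Prod.mk.injEq] at h ⊢
  rcases h with ⟨⟨h1, h2⟩, _⟩ | ⟨⟨h1, h2⟩, ⟨h3, h4⟩⟩
  · exact ⟨h1, h2⟩
  · exact absurd (by linear_combination h4 - h2) (two_ne hn)

lemma vert_eq (hn : 3 ≤ n) {v w : ZMod n × ZMod n}
    (h : s(v, (v.1 + 1, v.2)) = s(w, (w.1 + 1, w.2))) : v = w := by
  obtain ⟨a, b⟩ := v
  obtain ⟨c, d⟩ := w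
  rw [Sym2.eq_iff] at h
  simp only [Prod.mk.injEq] at h ⊢
  rcases h with ⟨⟨h1, h2⟩, _⟩ | ⟨⟨h1, h2⟩, ⟨h3, h4⟩⟩
  · exact ⟨h1, h2⟩
  · exact absurd (by linear_combination h3 - h1) (two_ne hn)

lemma horiz_ne_vert (hn : 3 ≤ n) (v w : ZMod n × ZMod n) :
    s(v, (v.1, v.2 + 1)) ≠ s(w, (w.1 + 1, w.2)) := by
  intro h
  obtain ⟨a, b⟩ := v
  obtain ⟨c, d⟩ := w
  rw [Sym2.eq_iff] at h
  simp only [Prod.mk.injEq] at h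
  rcases h with ⟨⟨h1, h2⟩, ⟨h3, h4⟩⟩ | ⟨⟨h1, h2⟩, ⟨h3, h4⟩⟩
  · exact absurd (by linear_combination h1 - h3) (one_ne hn)
  · exact absurd (by linear_combination h3 - h1) (one_ne hn)

-- torus adjacency
lemma adj_horiz (hn : 3 ≤ n) (v : ZMod n × ZMod n) : (torGrid n).Adj v (v.1, v.2 + 1) := by
  rw [torGrid, SimpleGraph.fromRel_adj]
  refine ⟨?_, Or.inl (Or.inl ⟨rfl, rfl⟩)⟩
  intro hc
  have e2 : v.2 = v.2 + 1 := congrArg Prod.snd hc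
  exact one_ne hn (by linear_combination - e2)

lemma adj_vert (hn : 3 ≤ n) (v : ZMod n × ZMod n) : (torGrid n).Adj v (v.1 + 1, v.2) := by
  rw [torGrid, SimpleGraph.fromRel_adj]
  refine ⟨?_, Or.inl (Or.inr ⟨rfl, rfl⟩)⟩
  intro hc
  have e2 : v.1 = v.1 + 1 := congrArg Prod.fst hc
  exact one_ne hn (by linear_combination - e2)

-- sunlet adjacency
lemma sunlet_adj_cycle (hn : 3 ≤ n) (k : ZMod (n ^ 2)) :
    (sunlet (n ^ 2)).Adj (Sum.inl k) (Sum.inl (k + 1)) := by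
  rw [sunlet, SimpleGraph.fromRel_adj]
  refine ⟨?_, Or.inl rfl⟩
  intro hc
  have h2 : k = k + 1 := Sum.inl.inj hc
  exact one_ne' hn (by linear_combination - h2)

lemma sunlet_adj_leaf (hn : 3 ≤ n) (k : ZMod (n ^ 2)) :
    (sunlet (n ^ 2)).Adj (Sum.inl k) (Sum.inr k) := by
  rw [sunlet, SimpleGraph.fromRel_adj]
  exact ⟨by simp, Or.inl rfl⟩

-- classification of sunlet edges
lemma sunlet_edge_form (hn : 3 ≤ n) {e : Sym2 (ZMod (n ^ 2) ⊕ ZMod (n ^ 2))}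
    (he : e ∈ (sunlet (n ^ 2)).edgeSet) :
    ∃ k, e = s(Sum.inl k, Sum.inl (k + 1)) ∨ e = s(Sum.inl k, Sum.inr k) := by
  induction e with
  | _ u w =>
    rw [SimpleGraph.mem_edgeSet, sunlet, SimpleGraph.fromRel_adj] at he
    obtain ⟨hne, h⟩ := he
    rcases u with a | a <;> rcases w with b | b
    · rcases h with h | h
      · exact ⟨a, Or.inl (by rw [(h : b = a + 1)])⟩
      · exact ⟨b, Or.inl (by rw [(h : a = b + 1)]; exact Sym2.eq_swap)⟩
    · rcases h with h | h
      · exact ⟨b, Or.inr (by rw [(h : a = b)])⟩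
      · exact (h : False).elim
    · rcases h with h | h
      · exact (h : False).elim
      · exact ⟨a, Or.inr (by rw [(h : b = a)]; exact Sym2.eq_swap)⟩
    · rcases h with h | h
      · exact (h : False).elim
      · exact (h : False).elim

-- classification of torus edges
lemma tor_edge_form (hn : 3 ≤ n) {e : Sym2 (ZMod n × ZMod n)}
    (he : e ∈ (torGrid n).edgeSet) :
    ∃ v : ZMod n × ZMod n, e = s(v, (v.1, v.2 + 1)) ∨ e = s(v, (v.1 + 1, v.2)) := by
  induction e with
  | _ u w =>
    rw [SimpleGraph.mem_edgeSet, torGrid, SimpleGraph.fromRel_adj] at he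
    obtain ⟨hne, h⟩ := he
    rcases h with (⟨h1, h2⟩ | ⟨h1, h2⟩) | (⟨h1, h2⟩ | ⟨h1, h2⟩)
    · exact ⟨u, Or.inl (by rw [show w = (u.1, u.2 + 1) from Prod.ext_iff.mpr ⟨h1.symm, h2⟩])⟩
    · exact ⟨u, Or.inr (by rw [show w = (u.1 + 1, u.2) from Prod.ext_iff.mpr ⟨h2, h1.symm⟩])⟩
    · refine ⟨w, Or.inl ?_⟩
      rw [show u = (w.1, w.2 + 1) from Prod.ext_iff.mpr ⟨h1.symm, h2⟩]
      exact Sym2.eq_swap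
    · refine ⟨w, Or.inr ?_⟩
      rw [show u = (w.1 + 1, w.2) from Prod.ext_iff.mpr ⟨h2, h1.symm⟩]
      exact Sym2.eq_swap

lemma adj_cycle_img (hn : 3 ≤ n) (a : ZMod (n ^ 2)) :
    (torGrid n).Adj (fmap n a) (fmap n (a + 1)) := by
  rw [fmap_step hn]
  by_cases hc : (fmap n a).1 + (fmap n a).2 = -1
  · rw [if_pos hc]; exact adj_vert hn _
  · rw [if_neg hc]; exact adj_horiz hn _

lemma adj_leaf_img (hn : 3 ≤ n) (a : ZMod (n ^ 2)) :
    (torGrid n).Adj (fmap n a) (gmap n (fmap n a)) := by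
  unfold gmap
  by_cases hc : (fmap n a).1 + (fmap n a).2 = -1
  · rw [if_pos hc]; exact adj_horiz hn _
  · rw [if_neg hc]; exact adj_vert hn _

/-- The covering homomorphism. -/
def phi (n : ℕ) (hn : 3 ≤ n) : sunlet (n ^ 2) →g torGrid n where
  toFun := Sum.elim (fmap n) (fun k => gmap n (fmap n k))
  map_rel' := by
    intro u w h
    rw [sunlet, SimpleGraph.fromRel_adj] at h
    obtain ⟨hne, hrel⟩ := h
    rcases u with a | a <;> rcases w with b | b
    · rcases hrel with h | h
      · rw [(h : b = a + 1)]; exact adj_cycle_img hn a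
      · rw [(h : a = b + 1)]; exact (adj_cycle_img hn b).symm
    · rcases hrel with h | h
      · rw [(h : a = b)]; exact adj_leaf_img hn b
      · exact (h : False).elim
    · rcases hrel with h | h
      · exact (h : False).elim
      · rw [(h : b = a)]; exact (adj_leaf_img hn a).symm
    · rcases hrel with h | h
      · exact (h : False).elim
      · exact (h : False).elim

lemma phi_inl (hn : 3 ≤ n) (k : ZMod (n ^ 2)) : phi n hn (Sum.inl k) = fmap n k := rfl
lemma phi_inr (hn : 3 ≤ n) (k : ZMod (n ^ 2)) :
    phi n hn (Sum.inr k) = gmap n (fmap n k) := rfl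

lemma cycle_img (hn : 3 ≤ n) (k : ZMod (n ^ 2)) :
    Sym2.map (⇑(phi n hn)) s(Sum.inl k, Sum.inl (k + 1)) =
      if (fmap n k).1 + (fmap n k).2 = -1
      then s(fmap n k, ((fmap n k).1 + 1, (fmap n k).2))
      else s(fmap n k, ((fmap n k).1, (fmap n k).2 + 1)) := by
  rw [Sym2.map_pair_eq, phi_inl, phi_inl, fmap_step hn]
  split_ifs <;> rfl

lemma leaf_img (hn : 3 ≤ n) (k : ZMod (n ^ 2)) :
    Sym2.map (⇑(phi n hn)) s(Sum.inl k, Sum.inr k) =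
      if (fmap n k).1 + (fmap n k).2 = -1
      then s(fmap n k, ((fmap n k).1, (fmap n k).2 + 1))
      else s(fmap n k, ((fmap n k).1 + 1, (fmap n k).2)) := by
  rw [Sym2.map_pair_eq, phi_inl, phi_inr]
  unfold gmap
  split_ifs <;> rfl

lemma fmap_inj (hn : 3 ≤ n) : Function.Injective (fmap n) :=
  Function.LeftInverse.injective (finv_fmap hn)

lemma mapEdgeSet_inj (hn : 3 ≤ n) : Function.Injective (phi n hn).mapEdgeSet := by
  intro e1 e2 h12
  have h : Sym2.map (⇑(phi n hn)) e1.val = Sym2.map (⇑(phi n hn)) e2.val :=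
    Subtype.ext_iff.mp h12
  obtain ⟨k1, hc1 | hc1⟩ := sunlet_edge_form hn e1.2 <;>
    obtain ⟨k2, hc2 | hc2⟩ := sunlet_edge_form hn e2.2 <;>
      rw [hc1, hc2] at h <;>
        [rw [cycle_img hn, cycle_img hn] at h;
         rw [cycle_img hn, leaf_img hn] at h;
         rw [leaf_img hn, cycle_img hn] at h;
         rw [leaf_img hn, leaf_img hn] at h] <;>
      by_cases s1 : (fmap n k1).1 + (fmap n k1).2 = -1 <;>
        by_cases s2 : (fmap n k2).1 + (fmap n k2).2 = -1 <;>
          simp only [s1, s2, if_pos, if_neg, if_true, if_false] at h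
  -- cycle/cycle
  · rw [Subtype.ext_iff, hc1, hc2, fmap_inj hn (vert_eq hn h)]
  · exact absurd h.symm (horiz_ne_vert hn _ _)
  · exact absurd h (horiz_ne_vert hn _ _)
  · rw [Subtype.ext_iff, hc1, hc2, fmap_inj hn (horiz_eq hn h)]
  -- cycle/leaf
  · exact absurd h.symm (horiz_ne_vert hn _ _)
  · exact absurd (by rw [← vert_eq hn h]; exact s1) s2
  · exact absurd (by rw [horiz_eq hn h]; exact s2) s1
  · exact absurd h (horiz_ne_vert hn _ _)
  -- leaf/cycle
  · exact absurd h (horiz_ne_vert hn _ _)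
  · exact absurd (by rw [← horiz_eq hn h]; exact s1) s2
  · exact absurd (by rw [vert_eq hn h]; exact s2) s1
  · exact absurd h.symm (horiz_ne_vert hn _ _)
  -- leaf/leaf
  · rw [Subtype.ext_iff, hc1, hc2, fmap_inj hn (horiz_eq hn h)]
  · exact absurd h (horiz_ne_vert hn _ _)
  · exact absurd h.symm (horiz_ne_vert hn _ _)
  · rw [Subtype.ext_iff, hc1, hc2, fmap_inj hn (vert_eq hn h)]

lemma mapEdgeSet_surj (hn : 3 ≤ n) : Function.Surjective (phi n hn).mapEdgeSet := by
  rintro ⟨e, hin⟩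
  obtain ⟨v, hv | hv⟩ := tor_edge_form hn hin
  · by_cases hs : v.1 + v.2 = -1
    · -- horizontal with sum -1 : leaf edge
      refine ⟨⟨s(Sum.inl (finv n v), Sum.inr (finv n v)), sunlet_adj_leaf hn _⟩, ?_⟩
      apply Subtype.ext
      show Sym2.map (⇑(phi n hn)) s(Sum.inl (finv n v), Sum.inr (finv n v)) = e
      rw [leaf_img hn, fmap_finv hn, if_pos hs, hv]
    · -- horizontal with sum ≠ -1 : cycle edge
      refine ⟨⟨s(Sum.inl (finv n v), Sum.inl (finv n v + 1)), sunlet_adj_cycle hn _⟩, ?_⟩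
      apply Subtype.ext
      show Sym2.map (⇑(phi n hn)) s(Sum.inl (finv n v), Sum.inl (finv n v + 1)) = e
      rw [cycle_img hn, fmap_finv hn, if_neg hs, hv]
  · by_cases hs : v.1 + v.2 = -1
    · refine ⟨⟨s(Sum.inl (finv n v), Sum.inl (finv n v + 1)), sunlet_adj_cycle hn _⟩, ?_⟩
      apply Subtype.ext
      show Sym2.map (⇑(phi n hn)) s(Sum.inl (finv n v), Sum.inl (finv n v + 1)) = e
      rw [cycle_img hn, fmap_finv hn, if_pos hs, hv]
    · refine ⟨⟨s(Sum.inl (finv n v), Sum.inr (finv n v)), sunlet_adj_leaf hn _⟩, ?_⟩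
      apply Subtype.ext
      show Sym2.map (⇑(phi n hn)) s(Sum.inl (finv n v), Sum.inr (finv n v)) = e
      rw [leaf_img hn, fmap_finv hn, if_neg hs, hv]

lemma preimage_card (hn : 3 ≤ n) (v : ZMod n × ZMod n) :
    Nat.card (⇑(phi n hn) ⁻¹' {v} : Set (ZMod (n ^ 2) ⊕ ZMod (n ^ 2))) = 2 := by
  have hset : (⇑(phi n hn) ⁻¹' {v} : Set (ZMod (n ^ 2) ⊕ ZMod (n ^ 2))) =
      {Sum.inl (finv n v), Sum.inr (finv n (ginv n v))} := by
    ext x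
    rcases x with k | k
    · simp only [Set.mem_preimage, Set.mem_singleton_iff, Set.mem_insert_iff,
        phi_inl hn, reduceCtorEq, or_false, Sum.inl.injEq]
      constructor
      · intro h; rw [← h, finv_fmap hn]
      · intro h; rw [h, fmap_finv hn]
    · simp only [Set.mem_preimage, Set.mem_singleton_iff, Set.mem_insert_iff,
        phi_inr hn, reduceCtorEq, false_or, Sum.inr.injEq]
      constructor
      · intro h
        rw [← h, ginv_gmap hn, finv_fmap hn]
      · intro h
        rw [h, fmap_finv hn, gmap_ginv hn]
  rw [hset, Nat.card_coe_set_eq, Set.ncard_pair (by simp)]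

end SunletAux

/-- For `n ≥ 3` there is a homomorphism from the sunlet `S¹_{n²}` to `C_n □ C_n`
which is bijective on edges, 2-to-1 on vertices, and injective on the sunlet's
cycle vertices (so the unique cycle maps onto a Hamiltonian cycle). -/
theorem sunlet_covering_one (n : ℕ) (hn : 3 ≤ n) :
    ∃ φ : sunlet (n ^ 2) →g torGrid n,
      Function.Bijective φ.mapEdgeSet ∧
      (∀ v : ZMod n × ZMod n, Nat.card (⇑φ ⁻¹' {v} : Set (ZMod (n ^ 2) ⊕ ZMod (n ^ 2))) = 2) ∧
      Function.Injective (fun k : ZMod (n ^ 2) => φ (Sum.inl k)) := by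
  refine ⟨SunletAux.phi n hn,
    ⟨SunletAux.mapEdgeSet_inj hn, SunletAux.mapEdgeSet_surj hn⟩,
    SunletAux.preimage_card hn, ?_⟩
  intro a b hab
  exact SunletAux.fmap_inj hn hab
end

section
/- For every integer n ≥ 2, there exists a graph homomorphism φ from the disjoint union of n copies of the sunlet graph S¹_{4n} to the toroidal grid C_{2n} □ C_{2n} such that (i) the induced map on edge sets is a bijection, (ii) every vertex of C_{2n} □ C_{2n} has exactly two φ-preimages, and (iii) φ is injective on the set of all cycle vertices of the n sunlets (so the n sunlet cycles map isomorphically onto n pairwise vertex-disjoint cycles of length 4n). -/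
/-- The disjoint union of `m` copies of a graph `H`: vertex set `Fin m × V`,
with `(i,u)` adjacent to `(j,w)` iff `i = j` and `u` adjacent to `w`. -/
def copies (m : ℕ) {V : Type*} (H : SimpleGraph V) : SimpleGraph (Fin m × V) where
  Adj a b := a.1 = b.1 ∧ H.Adj a.2 b.2
  symm := ⟨fun a b h => ⟨h.1.symm, h.2.symm⟩⟩
  loopless := ⟨fun a h => H.loopless.irrefl a.2 h.2⟩

namespace SunletCover

/-- Position of the `k`-th cycle vertex of staircase `i`. -/
def pos (n : ℕ) (i : Fin n) (k : ZMod (4*n)) : ZMod (2*n) × ZMod (2*n) :=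
  (((2*i.val + (k.val+1)/2 : ℕ) : ZMod (2*n)), ((k.val/2 : ℕ) : ZMod (2*n)))

/-- Position of the image of the `k`-th leaf of staircase `i`. -/
def lpos (n : ℕ) (i : Fin n) (k : ZMod (4*n)) : ZMod (2*n) × ZMod (2*n) :=
  if k.val % 2 = 0 then ((pos n i k).1, (pos n i k).2 + 1)
  else ((pos n i k).1 + 1, (pos n i k).2)

/-- The covering map. -/
def F (n : ℕ) : Fin n × (ZMod (4*n) ⊕ ZMod (4*n)) → ZMod (2*n) × ZMod (2*n)
  | (i, Sum.inl k) => pos n i k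
  | (i, Sum.inr k) => lpos n i k

lemma castInj {m a b : ℕ} (ha : a < m) (hb : b < m) (h : (a : ZMod m) = b) : a = b := by
  have := congrArg ZMod.val h
  rwa [ZMod.val_cast_of_lt ha, ZMod.val_cast_of_lt hb] at this

lemma one_ne_zero_zmod {m : ℕ} (h : 1 < m) : (1 : ZMod m) ≠ 0 := by
  intro he
  have h2 : ((1:ℕ) : ZMod m) = ((0:ℕ) : ZMod m) := by push_cast; exact he
  have := castInj (by omega) (by omega) h2
  omega

lemma two_ne_zero_zmod {m : ℕ} (h : 2 < m) : (2 : ZMod m) ≠ 0 := by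
  intro he
  have h2 : ((2:ℕ) : ZMod m) = ((0:ℕ) : ZMod m) := by push_cast; exact he
  have := castInj (by omega) (by omega) h2
  omega

lemma cast_val_self {m : ℕ} [NeZero m] (a : ZMod m) : ((a.val : ℕ) : ZMod m) = a := by
  rw [ZMod.natCast_val, ZMod.cast_id]

lemma pos_inj {n : ℕ} (hn : 2 ≤ n) {i j : Fin n} {k l : ZMod (4*n)}
    (h : pos n i k = pos n j l) : i = j ∧ k = l := by
  haveI : NeZero (4*n) := ⟨by omega⟩
  have hk := ZMod.val_lt k; have hl := ZMod.val_lt l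
  have h1 := congrArg Prod.fst h
  have h2 := congrArg Prod.snd h
  simp only [pos] at h1 h2
  have e2 : k.val / 2 = l.val / 2 := castInj (by omega) (by omega) h2
  have e1 : ((2*i.val + k.val % 2 : ℕ) : ZMod (2*n)) = ((2*j.val + l.val % 2 : ℕ) : ZMod (2*n)) := by
    have ha : (k.val+1)/2 = k.val/2 + k.val % 2 := by omega
    have hb : (l.val+1)/2 = l.val/2 + l.val % 2 := by omega
    rw [ha, hb, e2] at h1
    push_cast at h1 ⊢
    linear_combination h1
  have hi := i.isLt; have hj := j.isLt
  have e1' : 2*i.val + k.val % 2 = 2*j.val + l.val % 2 := castInj (by omega) (by omega) e1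
  refine ⟨Fin.ext (by omega), ZMod.val_injective _ (by omega)⟩

lemma pos_succ {n : ℕ} (hn : 2 ≤ n) (i : Fin n) (k : ZMod (4*n)) :
    pos n i (k+1) = if k.val % 2 = 0 then ((pos n i k).1 + 1, (pos n i k).2)
                    else ((pos n i k).1, (pos n i k).2 + 1) := by
  haveI : NeZero (4*n) := ⟨by omega⟩
  haveI : Fact (1 < 4*n) := ⟨by omega⟩
  have hk := ZMod.val_lt k
  have hval : (k+1).val = (k.val + 1) % (4*n) := by rw [ZMod.val_add, ZMod.val_one]
  have hz : ((2*n : ℕ) : ZMod (2*n)) = 0 := ZMod.natCast_self _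
  by_cases hl : k.val = 4*n - 1
  · have hodd : ¬ (k.val % 2 = 0) := by omega
    have hv1 : (k+1).val = 0 := by
      rw [hval, hl, show 4*n - 1 + 1 = 4*n by omega, Nat.mod_self]
    rw [if_neg hodd]
    have d3 : (k.val + 1)/2 = 2*n := by omega
    have d4 : k.val/2 = 2*n - 1 := by omega
    have hz' : (2 : ZMod (2*n)) * (n : ℕ) = 0 := by push_cast at hz; linear_combination hz
    have hb : ((2*n - 1 : ℕ) : ZMod (2*n)) + 1 = 0 := by
      rw [show (1 : ZMod (2*n)) = ((1:ℕ) : ZMod (2*n)) by push_cast; ring,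
        ← Nat.cast_add, show (2*n - 1 : ℕ) + 1 = 2*n by omega, hz]
    simp only [pos, hv1, d3, d4, Prod.mk.injEq]
    constructor
    · push_cast
      linear_combination - hz'
    · rw [show (0:ℕ)/2 = 0 from rfl]
      rw [hb]
      norm_num
  · have hv1 : (k+1).val = k.val + 1 := by
      rw [hval, Nat.mod_eq_of_lt (by omega)]
    by_cases hp : k.val % 2 = 0
    · rw [if_pos hp]
      have d1 : (k.val + 1 + 1)/2 = (k.val + 1)/2 + 1 := by omega
      have d2 : (k.val + 1)/2 = k.val/2 := by omega
      refine Prod.ext ?_ ?_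
      · show ((2*i.val + ((k+1).val+1)/2 : ℕ) : ZMod (2*n)) = ((2*i.val + (k.val+1)/2 : ℕ) : ZMod (2*n)) + 1
        rw [hv1, d1, d2]
        push_cast; ring
      · show (((k+1).val/2 : ℕ) : ZMod (2*n)) = ((k.val/2 : ℕ) : ZMod (2*n))
        rw [hv1, d2]
    · rw [if_neg hp]
      have d1 : (k.val + 1 + 1)/2 = (k.val + 1)/2 := by omega
      have d2 : (k.val + 1)/2 = k.val/2 + 1 := by omega
      refine Prod.ext ?_ ?_
      · show ((2*i.val + ((k+1).val+1)/2 : ℕ) : ZMod (2*n)) = ((2*i.val + (k.val+1)/2 : ℕ) : ZMod (2*n))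
        rw [hv1, d1]
      · show (((k+1).val/2 : ℕ) : ZMod (2*n)) = ((k.val/2 : ℕ) : ZMod (2*n)) + 1
        rw [hv1, d2]
        push_cast; ring

lemma lpos_even {n : ℕ} {i : Fin n} {k : ZMod (4*n)} (hp : k.val % 2 = 0) :
    lpos n i k = ((pos n i k).1, (pos n i k).2 + 1) := by simp [lpos, hp]

lemma lpos_odd {n : ℕ} {i : Fin n} {k : ZMod (4*n)} (hp : k.val % 2 = 1) :
    lpos n i k = ((pos n i k).1 + 1, (pos n i k).2) := by simp [lpos, hp]

/-- parity of the difference of coordinates -/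
def dpar (n : ℕ) (v : ZMod (2*n) × ZMod (2*n)) : ℕ := (v.1 - v.2).val % 2

lemma pos_sub {n : ℕ} (i : Fin n) (k : ZMod (4*n)) :
    (pos n i k).1 - (pos n i k).2 = ((2*i.val + k.val % 2 : ℕ) : ZMod (2*n)) := by
  simp only [pos]
  have ha : (k.val+1)/2 = k.val/2 + k.val % 2 := by omega
  rw [ha]; push_cast; ring

lemma parity_val_cast {n : ℕ} (a : ℕ) : ((a : ZMod (2*n))).val % 2 = a % (2*n) % 2 := by
  rw [ZMod.val_natCast]

lemma dpar_pos {n : ℕ} (hn : 2 ≤ n) (i : Fin n) (k : ZMod (4*n)) :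
    dpar n (pos n i k) = k.val % 2 := by
  rw [dpar, pos_sub, ZMod.val_natCast]
  have := Nat.mod_mod_of_dvd (2*i.val + k.val % 2) (⟨n, rfl⟩ : 2 ∣ 2*n)
  omega

lemma dpar_lpos {n : ℕ} (hn : 2 ≤ n) (i : Fin n) (k : ZMod (4*n)) :
    dpar n (lpos n i k) = 1 - k.val % 2 := by
  by_cases hp : k.val % 2 = 0
  · rw [lpos_even hp]
    have hz : ((2*n : ℕ) : ZMod (2*n)) = 0 := ZMod.natCast_self _
    have hdiff : (pos n i k).1 - ((pos n i k).2 + 1) = ((2*i.val + 2*n - 1 : ℕ) : ZMod (2*n)) := by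
      have hps := pos_sub i k
      rw [hp] at hps
      have hb : (2*i.val + 2*n - 1 : ℕ) + 1 = 2*i.val + 2*n := by omega
      have hc : ((2*i.val + 2*n - 1 : ℕ) : ZMod (2*n)) + 1 = ((2*i.val : ℕ) : ZMod (2*n)) := by
        rw [show (1 : ZMod (2*n)) = ((1:ℕ) : ZMod (2*n)) by push_cast; ring, ← Nat.cast_add, hb,
          Nat.cast_add, hz, add_zero]
      have hps' : (pos n i k).1 - (pos n i k).2 = ((2*i.val : ℕ) : ZMod (2*n)) := by
        rw [hps]; norm_num
      linear_combination hps' - hc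
    show ((pos n i k).1 - ((pos n i k).2 + 1)).val % 2 = 1 - k.val % 2
    rw [hdiff, ZMod.val_natCast, hp]
    have := Nat.mod_mod_of_dvd (2*i.val + 2*n - 1) (⟨n, rfl⟩ : 2 ∣ 2*n)
    omega
  · rw [lpos_odd (by omega)]
    have hps := pos_sub i k
    have hp1 : k.val % 2 = 1 := by omega
    rw [hp1] at hps
    have hdiff : ((pos n i k).1 + 1) - (pos n i k).2 = ((2*i.val + 2 : ℕ) : ZMod (2*n)) := by
      have : ((2*i.val + 2 : ℕ) : ZMod (2*n)) = ((2*i.val + 1 : ℕ) : ZMod (2*n)) + 1 := by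
        push_cast; ring
      rw [this]
      linear_combination hps
    show (((pos n i k).1 + 1) - (pos n i k).2).val % 2 = 1 - k.val % 2
    rw [hdiff, ZMod.val_natCast, hp1]
    have := Nat.mod_mod_of_dvd (2*i.val + 2) (⟨n, rfl⟩ : 2 ∣ 2*n)
    omega

lemma lpos_inj {n : ℕ} (hn : 2 ≤ n) {i j : Fin n} {k l : ZMod (4*n)}
    (h : lpos n i k = lpos n j l) : i = j ∧ k = l := by
  have hd := congrArg (dpar n) h
  rw [dpar_lpos hn, dpar_lpos hn] at hd
  have hk2 : k.val % 2 = l.val % 2 := by omega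
  by_cases hp : k.val % 2 = 0
  · rw [lpos_even hp, lpos_even (by omega)] at h
    have h1 := congrArg Prod.fst h
    have h2 := congrArg Prod.snd h
    simp only at h1 h2
    exact pos_inj hn (Prod.ext h1 (by linear_combination h2))
  · rw [lpos_odd (by omega), lpos_odd (by omega)] at h
    have h1 := congrArg Prod.fst h
    have h2 := congrArg Prod.snd h
    simp only at h1 h2
    exact pos_inj hn (Prod.ext (by linear_combination h1) h2)

lemma adj_right {n : ℕ} (hn : 2 ≤ n) (v : ZMod (2*n) × ZMod (2*n)) :
    (torGrid (2*n)).Adj v (v.1 + 1, v.2) := by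
  rw [torGrid, SimpleGraph.fromRel_adj]
  refine ⟨?_, Or.inl (Or.inr ⟨rfl, rfl⟩)⟩
  intro he
  have h1 := congrArg Prod.fst he
  simp only at h1
  exact one_ne_zero_zmod (m := 2*n) (by omega) (by linear_combination - h1)

lemma adj_up {n : ℕ} (hn : 2 ≤ n) (v : ZMod (2*n) × ZMod (2*n)) :
    (torGrid (2*n)).Adj v (v.1, v.2 + 1) := by
  rw [torGrid, SimpleGraph.fromRel_adj]
  refine ⟨?_, Or.inl (Or.inl ⟨rfl, rfl⟩)⟩
  intro he
  have h1 := congrArg Prod.snd he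
  simp only at h1
  exact one_ne_zero_zmod (m := 2*n) (by omega) (by linear_combination - h1)

lemma adj_cyc {n : ℕ} (hn : 2 ≤ n) (i : Fin n) (a : ZMod (4*n)) :
    (torGrid (2*n)).Adj (pos n i a) (pos n i (a+1)) := by
  rw [pos_succ hn]
  by_cases hp : a.val % 2 = 0
  · rw [if_pos hp]; exact adj_right hn _
  · rw [if_neg hp]; exact adj_up hn _

lemma adj_pend {n : ℕ} (hn : 2 ≤ n) (i : Fin n) (a : ZMod (4*n)) :
    (torGrid (2*n)).Adj (pos n i a) (lpos n i a) := by
  by_cases hp : a.val % 2 = 0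
  · rw [lpos_even hp]; exact adj_up hn _
  · rw [lpos_odd (by omega)]; exact adj_right hn _

lemma homF {n : ℕ} (hn : 2 ≤ n) :
    ∀ {u w}, (copies n (sunlet (4*n))).Adj u w → (torGrid (2*n)).Adj (F n u) (F n w) := by
  rintro ⟨i, x⟩ ⟨j, y⟩ ⟨hij, hadj⟩
  simp only at hij
  subst hij
  rw [sunlet, SimpleGraph.fromRel_adj] at hadj
  obtain ⟨hne, hrel⟩ := hadj
  cases x with
  | inl a =>
    cases y with
    | inl b =>
      simp only at hrel
      rcases hrel with hb | hb
      · subst hb; exact adj_cyc hn i a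
      · subst hb; exact (adj_cyc hn i b).symm
    | inr b =>
      rcases hrel with hb | hb
      · subst hb; exact adj_pend hn i a
      · exact hb.elim
  | inr a =>
    cases y with
    | inl b =>
      rcases hrel with hb | hb
      · exact hb.elim
      · subst hb; exact (adj_pend hn i b).symm
    | inr b =>
      rcases hrel with hb | hb <;> exact hb.elim

lemma pos_eval0 {n : ℕ} (hn : 2 ≤ n) (i : Fin n) {m : ℕ} (hm : m < 2*n) :
    pos n i ((2*m : ℕ) : ZMod (4*n)) = (((2*i.val + m : ℕ) : ZMod (2*n)), ((m : ℕ) : ZMod (2*n))) := by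
  have hv : (((2*m : ℕ) : ZMod (4*n))).val = 2*m := ZMod.val_cast_of_lt (by omega)
  simp only [pos, hv]
  rw [show (2*m+1)/2 = m by omega, show (2*m)/2 = m by omega]

lemma val_eval0 {n : ℕ} (hn : 2 ≤ n) {m : ℕ} (hm : m < 2*n) :
    (((2*m : ℕ) : ZMod (4*n))).val % 2 = 0 := by
  rw [ZMod.val_cast_of_lt (by omega)]; omega

lemma pos_eval1 {n : ℕ} (hn : 2 ≤ n) (i : Fin n) {m : ℕ} (hm : m < 2*n) :
    pos n i ((2*m + 1 : ℕ) : ZMod (4*n)) = (((2*i.val + m + 1 : ℕ) : ZMod (2*n)), ((m : ℕ) : ZMod (2*n))) := by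
  have hv : (((2*m + 1 : ℕ) : ZMod (4*n))).val = 2*m + 1 := ZMod.val_cast_of_lt (by omega)
  simp only [pos, hv]
  rw [show (2*m+1+1)/2 = m+1 by omega, show (2*m+1)/2 = m by omega,
    show 2*i.val + (m+1) = 2*i.val + m + 1 by omega]

lemma val_eval1 {n : ℕ} (hn : 2 ≤ n) {m : ℕ} (hm : m < 2*n) :
    (((2*m + 1 : ℕ) : ZMod (4*n))).val % 2 = 1 := by
  rw [ZMod.val_cast_of_lt (by omega)]; omega

lemma succ_parity {n : ℕ} (hn : 2 ≤ n) (k : ZMod (4*n)) :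
    (k+1).val % 2 = 1 - k.val % 2 := by
  haveI : NeZero (4*n) := ⟨by omega⟩
  haveI : Fact (1 < 4*n) := ⟨by omega⟩
  have hval : (k+1).val = (k.val + 1) % (4*n) := by rw [ZMod.val_add, ZMod.val_one]
  have h2 := Nat.mod_mod_of_dvd (k.val + 1) (⟨2*n, by ring⟩ : 2 ∣ 4*n)
  omega

lemma adj_cc {n : ℕ} (hn : 2 ≤ n) (i : Fin n) (a : ZMod (4*n)) :
    (copies n (sunlet (4*n))).Adj (i, Sum.inl a) (i, Sum.inl (a+1)) := by
  refine ⟨rfl, ?_⟩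
  rw [sunlet, SimpleGraph.fromRel_adj]
  refine ⟨?_, Or.inl rfl⟩
  intro he
  have h1 : a = a + 1 := by
    have := Sum.inl.inj he
    exact this
  exact one_ne_zero_zmod (m := 4*n) (by omega) (by linear_combination - h1)

lemma adj_cp {n : ℕ} (hn : 2 ≤ n) (i : Fin n) (a : ZMod (4*n)) :
    (copies n (sunlet (4*n))).Adj (i, Sum.inl a) (i, Sum.inr a) := by
  exact ⟨rfl, by rw [sunlet, SimpleGraph.fromRel_adj]; exact ⟨by simp, Or.inl rfl⟩⟩

lemma adj_cases {n : ℕ} (hn : 2 ≤ n) {u w : Fin n × (ZMod (4*n) ⊕ ZMod (4*n))}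
    (h : (copies n (sunlet (4*n))).Adj u w) :
    ∃ i a, s(u, w) = s(((i, Sum.inl a) : Fin n × (ZMod (4*n) ⊕ ZMod (4*n))), (i, Sum.inl (a+1)))
      ∨ s(u, w) = s(((i, Sum.inl a) : Fin n × (ZMod (4*n) ⊕ ZMod (4*n))), (i, Sum.inr a)) := by
  obtain ⟨i, x⟩ := u
  obtain ⟨j, y⟩ := w
  obtain ⟨hij, hadj⟩ := h
  simp only at hij
  subst hij
  rw [sunlet, SimpleGraph.fromRel_adj] at hadj
  obtain ⟨hne, hrel⟩ := hadj
  cases x with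
  | inl a =>
    cases y with
    | inl b =>
      simp only at hrel
      rcases hrel with hb | hb
      · exact ⟨i, a, Or.inl (by rw [hb])⟩
      · exact ⟨i, b, Or.inl (by rw [hb]; exact Sym2.eq_swap)⟩
    | inr b =>
      rcases hrel with hb | hb
      · exact ⟨i, a, Or.inr (by rw [hb])⟩
      · exact hb.elim
  | inr a =>
    cases y with
    | inl b =>
      rcases hrel with hb | hb
      · exact hb.elim
      · exact ⟨i, b, Or.inr (by rw [hb]; exact Sym2.eq_swap)⟩
    | inr b =>
      rcases hrel with hb | hb <;> exact hb.elim

lemma key_cc {n : ℕ} (hn : 2 ≤ n) {i j : Fin n} {a b : ZMod (4*n)}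
    (h : s(pos n i a, pos n i (a+1)) = s(pos n j b, pos n j (b+1))) : i = j ∧ a = b := by
  rw [Sym2.eq_iff] at h
  rcases h with ⟨h1, h2⟩ | ⟨h1, h2⟩
  · exact pos_inj hn h1
  · obtain ⟨hi, hk⟩ := pos_inj hn h1
    obtain ⟨_, hk2⟩ := pos_inj hn h2
    exact absurd (show (2 : ZMod (4*n)) = 0 by linear_combination hk2 - hk)
      (two_ne_zero_zmod (by omega))

lemma key_cp {n : ℕ} (hn : 2 ≤ n) {i j : Fin n} {a b : ZMod (4*n)}
    (h : s(pos n i a, pos n i (a+1)) = s(pos n j b, lpos n j b)) : False := by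
  rw [Sym2.eq_iff] at h
  rcases h with ⟨h1, h2⟩ | ⟨h1, h2⟩
  · obtain ⟨hi, hk⟩ := pos_inj hn h1
    subst hi; subst hk
    rw [pos_succ hn] at h2
    by_cases hp : a.val % 2 = 0
    · rw [if_pos hp, lpos_even hp] at h2
      have h3 := congrArg Prod.fst h2
      simp only at h3
      exact one_ne_zero_zmod (m := 2*n) (by omega) (by linear_combination h3)
    · rw [if_neg hp, lpos_odd (by omega)] at h2
      have h3 := congrArg Prod.snd h2
      simp only at h3
      exact one_ne_zero_zmod (m := 2*n) (by omega) (by linear_combination h3)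
  · obtain ⟨hi, hk⟩ := pos_inj hn h2
    subst hi
    rw [← hk] at h1
    by_cases hp : a.val % 2 = 0
    · have hp2 : (a+1).val % 2 = 1 := by rw [succ_parity hn]; omega
      rw [lpos_odd hp2, pos_succ hn, if_pos hp] at h1
      have h3 := congrArg Prod.fst h1
      simp only at h3
      exact two_ne_zero_zmod (m := 2*n) (by omega) (by linear_combination - h3)
    · have hp2 : (a+1).val % 2 = 0 := by rw [succ_parity hn]; omega
      rw [lpos_even hp2, pos_succ hn, if_neg hp] at h1
      have h3 := congrArg Prod.snd h1
      simp only at h3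
      exact two_ne_zero_zmod (m := 2*n) (by omega) (by linear_combination - h3)

lemma key_pp {n : ℕ} (hn : 2 ≤ n) {i j : Fin n} {a b : ZMod (4*n)}
    (h : s(pos n i a, lpos n i a) = s(pos n j b, lpos n j b)) : i = j ∧ a = b := by
  rw [Sym2.eq_iff] at h
  rcases h with ⟨h1, h2⟩ | ⟨h1, h2⟩
  · exact pos_inj hn h1
  · exfalso
    have hd := congrArg (dpar n) h1
    rw [dpar_pos hn, dpar_lpos hn] at hd
    by_cases hp : a.val % 2 = 0
    · have hb : b.val % 2 = 1 := by omega
      rw [lpos_odd hb] at h1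
      rw [lpos_even hp] at h2
      have h3 := congrArg Prod.snd h1
      have h4 := congrArg Prod.snd h2
      simp only at h3 h4
      exact one_ne_zero_zmod (m := 2*n) (by omega) (by linear_combination h4 - h3)
    · have hb : b.val % 2 = 0 := by omega
      rw [lpos_even hb] at h1
      rw [lpos_odd (by omega)] at h2
      have h3 := congrArg Prod.snd h1
      have h4 := congrArg Prod.snd h2
      simp only at h3 h4
      exact one_ne_zero_zmod (m := 2*n) (by omega) (by linear_combination h4 - h3)

lemma edge_inj {n : ℕ} (hn : 2 ≤ n) {e₁ e₂ : Sym2 (Fin n × (ZMod (4*n) ⊕ ZMod (4*n)))}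
    (h₁ : e₁ ∈ (copies n (sunlet (4*n))).edgeSet) (h₂ : e₂ ∈ (copies n (sunlet (4*n))).edgeSet)
    (h : Sym2.map (F n) e₁ = Sym2.map (F n) e₂) : e₁ = e₂ := by
  induction e₁ using Sym2.ind with | _ u w =>
  induction e₂ using Sym2.ind with | _ u' w' =>
  rw [SimpleGraph.mem_edgeSet] at h₁ h₂
  obtain ⟨i, a, hc1⟩ := adj_cases hn h₁
  obtain ⟨j, b, hc2⟩ := adj_cases hn h₂
  rcases hc1 with hc1 | hc1 <;> rcases hc2 with hc2 | hc2 <;>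
    rw [hc1, hc2] at h ⊢ <;>
    rw [Sym2.map_pair_eq, Sym2.map_pair_eq] at h
  · obtain ⟨hi, ha⟩ := key_cc hn h
    rw [hi, ha]
  · exact absurd h (by intro hh; exact key_cp hn hh)
  · exact absurd h.symm (by intro hh; exact key_cp hn hh)
  · obtain ⟨hi, ha⟩ := key_pp hn h
    rw [hi, ha]

lemma cast_diff_add {n : ℕ} (hn : 2 ≤ n) (x y : ZMod (2*n)) :
    (((x - y).val + y.val : ℕ) : ZMod (2*n)) = x := by
  haveI : NeZero (2*n) := ⟨by omega⟩
  rw [Nat.cast_add, cast_val_self, cast_val_self, sub_add_cancel]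

lemma edge_vert {n : ℕ} (hn : 2 ≤ n) (x y : ZMod (2*n)) :
    ∃ u w, (copies n (sunlet (4*n))).Adj u w ∧
      s(F n u, F n w) = s((x,y), (x, y+1)) := by
  haveI : NeZero (2*n) := ⟨by omega⟩
  have hdlt : (x - y).val < 2*n := ZMod.val_lt _
  have hylt : y.val < 2*n := ZMod.val_lt _
  by_cases hp : (x - y).val % 2 = 1
  · refine ⟨(⟨(x - y).val/2, by omega⟩, Sum.inl ((2*y.val + 1 : ℕ) : ZMod (4*n))),
      (⟨(x - y).val/2, by omega⟩, Sum.inl (((2*y.val + 1 : ℕ) : ZMod (4*n)) + 1)),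
      adj_cc hn _ _, ?_⟩
    have hpos : pos n ⟨(x - y).val/2, by omega⟩ ((2*y.val + 1 : ℕ) : ZMod (4*n)) = (x, y) := by
      rw [pos_eval1 hn _ hylt]
      refine Prod.ext ?_ (cast_val_self y)
      show ((2*((x - y).val/2) + y.val + 1 : ℕ) : ZMod (2*n)) = x
      rw [show 2*((x - y).val/2) + y.val + 1 = (x - y).val + y.val by omega]
      exact cast_diff_add hn x y
    show s(pos n _ _, pos n _ _) = _
    rw [pos_succ hn, if_neg (by rw [val_eval1 hn hylt]; omega), hpos]
  · refine ⟨(⟨(x - y).val/2, by omega⟩, Sum.inl ((2*y.val : ℕ) : ZMod (4*n))),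
      (⟨(x - y).val/2, by omega⟩, Sum.inr ((2*y.val : ℕ) : ZMod (4*n))),
      adj_cp hn _ _, ?_⟩
    have hpos : pos n ⟨(x - y).val/2, by omega⟩ ((2*y.val : ℕ) : ZMod (4*n)) = (x, y) := by
      rw [pos_eval0 hn _ hylt]
      refine Prod.ext ?_ (cast_val_self y)
      show ((2*((x - y).val/2) + y.val : ℕ) : ZMod (2*n)) = x
      rw [show 2*((x - y).val/2) + y.val = (x - y).val + y.val by omega]
      exact cast_diff_add hn x y
    show s(pos n _ _, lpos n _ _) = _
    rw [lpos_even (val_eval0 hn hylt), hpos]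

lemma edge_horiz {n : ℕ} (hn : 2 ≤ n) (x y : ZMod (2*n)) :
    ∃ u w, (copies n (sunlet (4*n))).Adj u w ∧
      s(F n u, F n w) = s((x,y), (x + 1, y)) := by
  haveI : NeZero (2*n) := ⟨by omega⟩
  have hdlt : (x - y).val < 2*n := ZMod.val_lt _
  have hylt : y.val < 2*n := ZMod.val_lt _
  by_cases hp : (x - y).val % 2 = 0
  · refine ⟨(⟨(x - y).val/2, by omega⟩, Sum.inl ((2*y.val : ℕ) : ZMod (4*n))),
      (⟨(x - y).val/2, by omega⟩, Sum.inl (((2*y.val : ℕ) : ZMod (4*n)) + 1)),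
      adj_cc hn _ _, ?_⟩
    have hpos : pos n ⟨(x - y).val/2, by omega⟩ ((2*y.val : ℕ) : ZMod (4*n)) = (x, y) := by
      rw [pos_eval0 hn _ hylt]
      refine Prod.ext ?_ (cast_val_self y)
      show ((2*((x - y).val/2) + y.val : ℕ) : ZMod (2*n)) = x
      rw [show 2*((x - y).val/2) + y.val = (x - y).val + y.val by omega]
      exact cast_diff_add hn x y
    show s(pos n _ _, pos n _ _) = _
    rw [pos_succ hn, if_pos (val_eval0 hn hylt), hpos]
  · refine ⟨(⟨(x - y).val/2, by omega⟩, Sum.inl ((2*y.val + 1 : ℕ) : ZMod (4*n))),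
      (⟨(x - y).val/2, by omega⟩, Sum.inr ((2*y.val + 1 : ℕ) : ZMod (4*n))),
      adj_cp hn _ _, ?_⟩
    have hpos : pos n ⟨(x - y).val/2, by omega⟩ ((2*y.val + 1 : ℕ) : ZMod (4*n)) = (x, y) := by
      rw [pos_eval1 hn _ hylt]
      refine Prod.ext ?_ (cast_val_self y)
      show ((2*((x - y).val/2) + y.val + 1 : ℕ) : ZMod (2*n)) = x
      rw [show 2*((x - y).val/2) + y.val + 1 = (x - y).val + y.val by omega]
      exact cast_diff_add hn x y
    show s(pos n _ _, lpos n _ _) = _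
    rw [lpos_odd (val_eval1 hn hylt), hpos]

lemma cpre_spec {n : ℕ} (hn : 2 ≤ n) (v : ZMod (2*n) × ZMod (2*n)) :
    ∃ u : Fin n × (ZMod (4*n) ⊕ ZMod (4*n)), u.2.isLeft = true ∧ F n u = v := by
  haveI : NeZero (2*n) := ⟨by omega⟩
  have hdlt : (v.1 - v.2).val < 2*n := ZMod.val_lt _
  have hylt : (v.2).val < 2*n := ZMod.val_lt _
  by_cases hp : (v.1 - v.2).val % 2 = 0
  · refine ⟨(⟨(v.1 - v.2).val/2, by omega⟩, Sum.inl ((2*(v.2).val : ℕ) : ZMod (4*n))), rfl, ?_⟩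
    show pos n _ _ = v
    rw [pos_eval0 hn _ hylt]
    refine Prod.ext ?_ (cast_val_self v.2)
    show ((2*((v.1 - v.2).val/2) + (v.2).val : ℕ) : ZMod (2*n)) = v.1
    rw [show 2*((v.1 - v.2).val/2) + (v.2).val = (v.1 - v.2).val + (v.2).val by omega]
    exact cast_diff_add hn v.1 v.2
  · refine ⟨(⟨(v.1 - v.2).val/2, by omega⟩, Sum.inl ((2*(v.2).val + 1 : ℕ) : ZMod (4*n))), rfl, ?_⟩
    show pos n _ _ = v
    rw [pos_eval1 hn _ hylt]
    refine Prod.ext ?_ (cast_val_self v.2)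
    show ((2*((v.1 - v.2).val/2) + (v.2).val + 1 : ℕ) : ZMod (2*n)) = v.1
    rw [show 2*((v.1 - v.2).val/2) + (v.2).val + 1 = (v.1 - v.2).val + (v.2).val by omega]
    exact cast_diff_add hn v.1 v.2

lemma lpre_spec {n : ℕ} (hn : 2 ≤ n) (v : ZMod (2*n) × ZMod (2*n)) :
    ∃ u : Fin n × (ZMod (4*n) ⊕ ZMod (4*n)), u.2.isLeft = false ∧ F n u = v := by
  haveI : NeZero (2*n) := ⟨by omega⟩
  have hdlt : (v.1 - v.2).val < 2*n := ZMod.val_lt _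
  have hylt : (v.2).val < 2*n := ZMod.val_lt _
  have hz : ((2*n : ℕ) : ZMod (2*n)) = 0 := ZMod.natCast_self _
  by_cases hp : (v.1 - v.2).val % 2 = 1
  · -- even leaf, at (v.1, v.2) with odd diff
    have hmlt : (v.2 - 1).val < 2*n := ZMod.val_lt _
    have hepar : ((v.1 - v.2).val + 1) % (2*n) % 2 = 0 := by
      have := Nat.mod_mod_of_dvd ((v.1 - v.2).val + 1) (⟨n, rfl⟩ : 2 ∣ 2*n)
      omega
    have helt : ((v.1 - v.2).val + 1) % (2*n) < 2*n := Nat.mod_lt _ (by omega)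
    refine ⟨(⟨(((v.1 - v.2).val + 1) % (2*n))/2, by omega⟩,
      Sum.inr ((2*(v.2 - 1).val : ℕ) : ZMod (4*n))), rfl, ?_⟩
    show lpos n _ _ = v
    rw [lpos_even (val_eval0 hn hmlt), pos_eval0 hn _ hmlt]
    refine Prod.ext ?_ ?_
    · show ((2*((((v.1 - v.2).val + 1) % (2*n))/2) + (v.2 - 1).val : ℕ) : ZMod (2*n)) = v.1
      rw [show 2*((((v.1 - v.2).val + 1) % (2*n))/2) + (v.2 - 1).val
          = ((v.1 - v.2).val + 1) % (2*n) + (v.2 - 1).val by omega]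
      rw [Nat.cast_add, ZMod.natCast_mod, Nat.cast_add, cast_val_self, cast_val_self,
        Nat.cast_one]
      ring_nf
    · show ((((v.2 - 1).val : ℕ)) : ZMod (2*n)) + 1 = v.2
      rw [cast_val_self, sub_add_cancel]
  · -- odd leaf
    have hepar : ((v.1 - v.2).val + 2*n - 2) % (2*n) % 2 = 0 := by
      have := Nat.mod_mod_of_dvd ((v.1 - v.2).val + 2*n - 2) (⟨n, rfl⟩ : 2 ∣ 2*n)
      omega
    have helt : ((v.1 - v.2).val + 2*n - 2) % (2*n) < 2*n := Nat.mod_lt _ (by omega)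
    refine ⟨(⟨((((v.1 - v.2).val + 2*n - 2) % (2*n)))/2, by omega⟩,
      Sum.inr ((2*(v.2).val + 1 : ℕ) : ZMod (4*n))), rfl, ?_⟩
    show lpos n _ _ = v
    rw [lpos_odd (val_eval1 hn hylt), pos_eval1 hn _ hylt]
    refine Prod.ext ?_ (cast_val_self v.2)
    show ((2*(((((v.1 - v.2).val + 2*n - 2) % (2*n)))/2) + (v.2).val + 1 : ℕ) : ZMod (2*n)) + 1 = v.1
    rw [show 2*(((((v.1 - v.2).val + 2*n - 2) % (2*n)))/2) + (v.2).val + 1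
        = ((v.1 - v.2).val + 2*n - 2) % (2*n) + (v.2).val + 1 by omega]
    have hb : ((((v.1 - v.2).val + 2*n - 2 : ℕ)) : ZMod (2*n)) + 2 = ((v.1 - v.2).val : ℕ) := by
      rw [show ((2 : ZMod (2*n))) = ((2:ℕ) : ZMod (2*n)) by push_cast; ring, ← Nat.cast_add,
        show (v.1 - v.2).val + 2*n - 2 + 2 = (v.1 - v.2).val + 2*n by omega,
        Nat.cast_add, hz, add_zero]
    rw [Nat.cast_add, Nat.cast_add, ZMod.natCast_mod, Nat.cast_one, cast_val_self]
    have hc : (((v.1 - v.2).val : ℕ) : ZMod (2*n)) = v.1 - v.2 := cast_val_self _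
    linear_combination hb + hc

lemma F_inj_pair {n : ℕ} (hn : 2 ≤ n) {u w : Fin n × (ZMod (4*n) ⊕ ZMod (4*n))}
    (hF : F n u = F n w) (hT : u.2.isLeft = w.2.isLeft) : u = w := by
  obtain ⟨i, x⟩ := u
  obtain ⟨j, y⟩ := w
  cases x with
  | inl a =>
    cases y with
    | inl b =>
      obtain ⟨hi, hk⟩ := pos_inj hn hF
      rw [hi, hk]
    | inr b => simp at hT
  | inr a =>
    cases y with
    | inl b => simp at hT
    | inr b =>
      obtain ⟨hi, hk⟩ := lpos_inj hn hF
      rw [hi, hk]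

end SunletCover

/-- For `n ≥ 2` there is a homomorphism from the disjoint union of `n` copies of the
sunlet `S¹_{4n}` to `C_{2n} □ C_{2n}` which is bijective on edges, 2-to-1 on vertices,
and injective on the cycle vertices of the sunlets. -/
theorem sunlet_covering_staircase (n : ℕ) (hn : 2 ≤ n) :
    ∃ φ : copies n (sunlet (4 * n)) →g torGrid (2 * n),
      Function.Bijective φ.mapEdgeSet ∧
      (∀ v : ZMod (2 * n) × ZMod (2 * n),
        Nat.card (⇑φ ⁻¹' {v} : Set (Fin n × (ZMod (4 * n) ⊕ ZMod (4 * n)))) = 2) ∧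
      Function.Injective (fun ik : Fin n × ZMod (4 * n) => φ (ik.1, Sum.inl ik.2)) := by
  classical
  refine ⟨⟨SunletCover.F n, fun {u w} h => SunletCover.homF hn h⟩, ⟨?_, ?_⟩, ?_, ?_⟩
  · -- injective on edges
    rintro ⟨e₁, h₁⟩ ⟨e₂, h₂⟩ h
    apply Subtype.ext
    apply SunletCover.edge_inj hn h₁ h₂
    exact congrArg Subtype.val h
  · -- surjective on edges
    rintro ⟨e, he⟩
    revert he
    induction e using Sym2.ind with | _ p q =>
    intro he
    have he' := he
    rw [SimpleGraph.mem_edgeSet, torGrid, SimpleGraph.fromRel_adj] at he'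
    obtain ⟨hne, hrel⟩ := he'
    rcases hrel with (⟨h1, h2⟩ | ⟨h1, h2⟩) | (⟨h1, h2⟩ | ⟨h1, h2⟩)
    · obtain ⟨u, w, hadj, heq⟩ := SunletCover.edge_vert hn p.1 p.2
      refine ⟨⟨s(u, w), (SimpleGraph.mem_edgeSet _).2 hadj⟩, Subtype.ext ?_⟩
      show Sym2.map (SunletCover.F n) s(u, w) = s(p, q)
      rw [Sym2.map_pair_eq, heq, Prod.mk.eta,
        show q = (p.1, p.2 + 1) from Prod.ext h1.symm h2]
    · obtain ⟨u, w, hadj, heq⟩ := SunletCover.edge_horiz hn p.1 p.2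
      refine ⟨⟨s(u, w), (SimpleGraph.mem_edgeSet _).2 hadj⟩, Subtype.ext ?_⟩
      show Sym2.map (SunletCover.F n) s(u, w) = s(p, q)
      rw [Sym2.map_pair_eq, heq, Prod.mk.eta,
        show q = (p.1 + 1, p.2) from Prod.ext h2 h1.symm]
    · obtain ⟨u, w, hadj, heq⟩ := SunletCover.edge_vert hn q.1 q.2
      refine ⟨⟨s(u, w), (SimpleGraph.mem_edgeSet _).2 hadj⟩, Subtype.ext ?_⟩
      show Sym2.map (SunletCover.F n) s(u, w) = s(p, q)
      rw [Sym2.map_pair_eq, heq, Prod.mk.eta,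
        show p = (q.1, q.2 + 1) from Prod.ext h1.symm h2]
      exact Sym2.eq_swap
    · obtain ⟨u, w, hadj, heq⟩ := SunletCover.edge_horiz hn q.1 q.2
      refine ⟨⟨s(u, w), (SimpleGraph.mem_edgeSet _).2 hadj⟩, Subtype.ext ?_⟩
      show Sym2.map (SunletCover.F n) s(u, w) = s(p, q)
      rw [Sym2.map_pair_eq, heq, Prod.mk.eta,
        show p = (q.1 + 1, q.2) from Prod.ext h2 h1.symm]
      exact Sym2.eq_swap
  · -- two-to-one
    intro v
    obtain ⟨uc, hTc, hFc⟩ := SunletCover.cpre_spec hn v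
    obtain ⟨ul, hTl, hFl⟩ := SunletCover.lpre_spec hn v
    have hset : ((fun u => SunletCover.F n u) ⁻¹' {v}
        : Set (Fin n × (ZMod (4 * n) ⊕ ZMod (4 * n)))) = {uc, ul} := by
      ext u
      simp only [Set.mem_preimage, Set.mem_singleton_iff, Set.mem_insert_iff]
      constructor
      · intro hu
        cases hbool : u.2.isLeft with
        | true =>
          left
          exact SunletCover.F_inj_pair hn (hu.trans hFc.symm) (by rw [hbool, hTc])
        | false =>
          right
          exact SunletCover.F_inj_pair hn (hu.trans hFl.symm) (by rw [hbool, hTl])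
      · rintro (rfl | rfl)
        · exact hFc
        · exact hFl
    have hne : uc ≠ ul := by
      intro hcon
      rw [hcon, hTl] at hTc
      exact Bool.noConfusion hTc
    show Nat.card ((fun u => SunletCover.F n u) ⁻¹' {v}
      : Set (Fin n × (ZMod (4 * n) ⊕ ZMod (4 * n)))) = 2
    rw [hset, Nat.card_coe_set_eq, Set.ncard_pair hne]
  · -- injective on cycle vertices
    rintro ⟨i, a⟩ ⟨j, b⟩ h
    obtain ⟨hi, hk⟩ := SunletCover.pos_inj hn (show SunletCover.pos n i a = SunletCover.pos n j b from h)
    rw [Prod.mk.injEq]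
    exact ⟨hi, hk⟩
end

section
/- For every integer n ≥ 2, there exists a graph homomorphism φ from the disjoint union of n² copies of the sunlet graph S¹_4 to the toroidal grid C_{2n} □ C_{2n} such that (i) the induced map on edge sets is a bijection, (ii) every vertex of C_{2n} □ C_{2n} has exactly two φ-preimages, and (iii) φ is injective on the set of all cycle vertices of the n² sunlets (so the n² sunlet 4-cycles map isomorphically onto n² pairwise vertex-disjoint 4-cycles). -/
namespace SC

variable {n : ℕ}

def g (n : ℕ) (a : ZMod n) (r : Fin 2) : ZMod (2 * n) := ((2 * a.val + (r : ℕ) : ℕ) : ZMod (2 * n))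

lemma g_val (hn : 2 ≤ n) (a : ZMod n) (r : Fin 2) : (g n a r).val = 2 * a.val + (r : ℕ) := by
  haveI : NeZero n := ⟨by omega⟩
  have ha := ZMod.val_lt a
  have hr := r.isLt
  rw [g, ZMod.val_natCast, Nat.mod_eq_of_lt (by omega)]

lemma g_inj (hn : 2 ≤ n) {a b : ZMod n} {r s : Fin 2} : g n a r = g n b s ↔ a = b ∧ r = s := by
  constructor
  · intro h
    haveI : NeZero n := ⟨by omega⟩
    have h2 := congrArg ZMod.val h
    rw [g_val hn, g_val hn] at h2
    have hr := r.isLt; have hs := s.isLt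
    exact ⟨ZMod.val_injective n (by omega), Fin.ext (by omega)⟩
  · rintro ⟨rfl, rfl⟩; rfl

lemma g_surj (hn : 2 ≤ n) (x : ZMod (2 * n)) : ∃ a r, x = g n a r := by
  haveI : NeZero n := ⟨by omega⟩
  haveI : NeZero (2 * n) := ⟨by omega⟩
  have hx := ZMod.val_lt x
  refine ⟨((x.val / 2 : ℕ) : ZMod n), ⟨x.val % 2, by omega⟩, ?_⟩
  have h1 : ((x.val / 2 : ℕ) : ZMod n).val = x.val / 2 := ZMod.val_cast_of_lt (by omega)
  rw [g, h1]
  have h2 : 2 * (x.val / 2) + x.val % 2 = x.val := by omega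
  rw [h2, ZMod.natCast_rightInverse x]

lemma gsucc0 (a : ZMod n) : g n a 0 + 1 = g n a 1 := by
  rw [g, g]; simp only [Fin.val_zero, Fin.val_one]; push_cast; ring

lemma gsucc1 (hn : 2 ≤ n) (a : ZMod n) : g n a 1 + 1 = g n (a + 1) 0 := by
  haveI : NeZero n := ⟨by omega⟩
  haveI : Fact (1 < n) := ⟨by omega⟩
  rw [g, g]
  have h : (a + 1).val = (a.val + 1) % n := by rw [ZMod.val_add, ZMod.val_one]
  rw [h]
  have h2 : 2 * ((a.val + 1) % n) + (0:Fin 2) ≡ 2 * (a.val + 1) [MOD 2 * n] := by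
    simpa using (Nat.mod_modEq (a.val + 1) n).mul_left' 2
  calc ((2 * a.val + ((1:Fin 2):ℕ) : ℕ) : ZMod (2*n)) + 1
      = ((2 * (a.val + 1) : ℕ) : ZMod (2*n)) := by
        simp only [Fin.val_one]; push_cast; ring
    _ = _ := ((ZMod.natCast_eq_natCast_iff _ _ _).mpr h2).symm

-- the three "successor" reformulations
lemma e_col0 (a : ZMod n) : g n a 1 = g n a 0 + 1 := (gsucc0 a).symm
lemma e_col1 (hn : 2 ≤ n) (a : ZMod n) : g n (a + 1) 0 = g n a 1 + 1 := (gsucc1 hn a).symm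
lemma e_col2 (hn : 2 ≤ n) (a : ZMod n) : g n a 0 = g n (a - 1) 1 + 1 := by
  rw [gsucc1 hn, sub_add_cancel]

lemma tadj_col (hn : 2 ≤ n) (x y : ZMod (2 * n)) : (torGrid (2 * n)).Adj (x, y) (x, y + 1) := by
  haveI : Fact (1 < 2 * n) := ⟨by omega⟩
  rw [torGrid, SimpleGraph.fromRel_adj]
  refine ⟨?_, Or.inl (Or.inl ⟨rfl, rfl⟩)⟩
  intro hcon
  have : y = y + 1 := congrArg Prod.snd hcon
  simp at this

lemma tadj_row (hn : 2 ≤ n) (x y : ZMod (2 * n)) : (torGrid (2 * n)).Adj (x, y) (x + 1, y) := by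
  haveI : Fact (1 < 2 * n) := ⟨by omega⟩
  rw [torGrid, SimpleGraph.fromRel_adj]
  refine ⟨?_, Or.inl (Or.inr ⟨rfl, rfl⟩)⟩
  intro hcon
  have : x = x + 1 := congrArg Prod.fst hcon
  simp at this

end SC

namespace SC

def cyc (n : ℕ) (a b : ZMod n) (k : ZMod 4) : ZMod (2 * n) × ZMod (2 * n) :=
  if k = 0 then (g n a 0, g n b 0)
  else if k = 1 then (g n a 0, g n b 1)
  else if k = 2 then (g n a 1, g n b 1)
  else (g n a 1, g n b 0)

def lf (n : ℕ) (a b : ZMod n) (k : ZMod 4) : ZMod (2 * n) × ZMod (2 * n) :=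
  if k = 0 then (g n a 0, g n (b - 1) 1)
  else if k = 1 then (g n (a - 1) 1, g n b 1)
  else if k = 2 then (g n a 1, g n (b + 1) 0)
  else (g n (a + 1) 0, g n b 0)

lemma cyc_0 (a b : ZMod n) : cyc n a b 0 = (g n a 0, g n b 0) := if_pos rfl
lemma cyc_1 (a b : ZMod n) : cyc n a b 1 = (g n a 0, g n b 1) := by
  rw [cyc, if_neg (by decide), if_pos rfl]
lemma cyc_2 (a b : ZMod n) : cyc n a b 2 = (g n a 1, g n b 1) := by
  rw [cyc, if_neg (by decide), if_neg (by decide), if_pos rfl]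
lemma cyc_3 (a b : ZMod n) : cyc n a b 3 = (g n a 1, g n b 0) := by
  rw [cyc, if_neg (by decide), if_neg (by decide), if_neg (by decide)]
lemma lf_0 (a b : ZMod n) : lf n a b 0 = (g n a 0, g n (b - 1) 1) := if_pos rfl
lemma lf_1 (a b : ZMod n) : lf n a b 1 = (g n (a - 1) 1, g n b 1) := by
  rw [lf, if_neg (by decide), if_pos rfl]
lemma lf_2 (a b : ZMod n) : lf n a b 2 = (g n a 1, g n (b + 1) 0) := by
  rw [lf, if_neg (by decide), if_neg (by decide), if_pos rfl]
lemma lf_3 (a b : ZMod n) : lf n a b 3 = (g n (a + 1) 0, g n b 0) := by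
  rw [lf, if_neg (by decide), if_neg (by decide), if_neg (by decide)]

def ai (n : ℕ) (i : Fin (n ^ 2)) : ZMod n := (((i : ℕ) / n : ℕ) : ZMod n)
def bi (n : ℕ) (i : Fin (n ^ 2)) : ZMod n := (((i : ℕ) % n : ℕ) : ZMod n)

def F (n : ℕ) (z : Fin (n ^ 2) × (ZMod 4 ⊕ ZMod 4)) : ZMod (2 * n) × ZMod (2 * n) :=
  Sum.elim (cyc n (ai n z.1) (bi n z.1)) (lf n (ai n z.1) (bi n z.1)) z.2

lemma F_inl (i : Fin (n ^ 2)) (k : ZMod 4) : F n (i, Sum.inl k) = cyc n (ai n i) (bi n i) k := rfl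
lemma F_inr (i : Fin (n ^ 2)) (k : ZMod 4) : F n (i, Sum.inr k) = lf n (ai n i) (bi n i) k := rfl

def enc (hn : 2 ≤ n) (p q : ZMod n) : Fin (n ^ 2) :=
  ⟨n * p.val + q.val, by
    haveI : NeZero n := ⟨by omega⟩
    have hp := ZMod.val_lt p; have hq := ZMod.val_lt q
    have : n * p.val + q.val < n * (p.val + 1) := by
      rw [Nat.mul_add, Nat.mul_one]; omega
    calc n * p.val + q.val < n * (p.val + 1) := this
      _ ≤ n * n := Nat.mul_le_mul_left n (by omega)
      _ = n ^ 2 := (sq n).symm⟩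

lemma ai_enc (hn : 2 ≤ n) (p q : ZMod n) : ai n (enc hn p q) = p := by
  haveI : NeZero n := ⟨by omega⟩
  have hq := ZMod.val_lt q
  rw [ai, enc]
  simp only [Nat.mul_add_div (by omega : 0 < n), Nat.div_eq_of_lt hq, Nat.add_zero]
  exact ZMod.natCast_rightInverse p

lemma bi_enc (hn : 2 ≤ n) (p q : ZMod n) : bi n (enc hn p q) = q := by
  haveI : NeZero n := ⟨by omega⟩
  have hq := ZMod.val_lt q
  rw [bi, enc]
  simp only [Nat.mul_add_mod, Nat.mod_eq_of_lt hq]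
  exact ZMod.natCast_rightInverse q

lemma enc_ai (hn : 2 ≤ n) (i : Fin (n ^ 2)) : enc hn (ai n i) (bi n i) = i := by
  haveI : NeZero n := ⟨by omega⟩
  have hi : (i : ℕ) < n * n := lt_of_lt_of_eq i.isLt (sq n)
  have h1 : (((i : ℕ) / n : ℕ) : ZMod n).val = (i : ℕ) / n :=
    ZMod.val_cast_of_lt (Nat.div_lt_of_lt_mul (by omega))
  have h2 : (((i : ℕ) % n : ℕ) : ZMod n).val = (i : ℕ) % n :=
    ZMod.val_cast_of_lt (Nat.mod_lt _ (by omega))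
  apply Fin.ext
  show n * (((i : ℕ) / n : ℕ) : ZMod n).val + (((i : ℕ) % n : ℕ) : ZMod n).val = (i : ℕ)
  rw [h1, h2, Nat.div_add_mod]

lemma zmod4_cases (k : ZMod 4) : k = 0 ∨ k = 1 ∨ k = 2 ∨ k = 3 := by revert k; decide
lemma fin2_cases (r : Fin 2) : r = 0 ∨ r = 1 := by revert r; decide

lemma sunlet_adj_cyc (k : ZMod 4) : (sunlet 4).Adj (Sum.inl k) (Sum.inl (k + 1)) := by
  rw [sunlet, SimpleGraph.fromRel_adj]
  exact ⟨by simp [(by revert k; decide : k ≠ k + 1)], Or.inl rfl⟩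

lemma sunlet_adj_pend (k : ZMod 4) : (sunlet 4).Adj (Sum.inl k) (Sum.inr k) := by
  rw [sunlet, SimpleGraph.fromRel_adj]
  exact ⟨by simp, Or.inl rfl⟩

lemma sunlet_nbr_inl {k : ZMod 4} {u} (h : (sunlet 4).Adj (Sum.inl k) u) :
    u = Sum.inl (k + 1) ∨ u = Sum.inl (k - 1) ∨ u = Sum.inr k := by
  rw [sunlet, SimpleGraph.fromRel_adj] at h
  obtain ⟨hne, h⟩ := h
  rcases u with c | c
  · change (c = k + 1) ∨ (k = c + 1) at h
    rcases h with rfl | h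
    · exact Or.inl rfl
    · exact Or.inr (Or.inl (by rw [h]; simp))
  · change (k = c) ∨ False at h
    rcases h with rfl | h
    · exact Or.inr (Or.inr rfl)
    · exact absurd h (by simp)

lemma sunlet_nbr_inr {k : ZMod 4} {u} (h : (sunlet 4).Adj (Sum.inr k) u) :
    u = Sum.inl k := by
  rw [sunlet, SimpleGraph.fromRel_adj] at h
  obtain ⟨hne, h⟩ := h
  rcases u with c | c
  · change False ∨ (c = k) at h
    rcases h with h | rfl
    · exact absurd h (by simp)
    · rfl
  · change False ∨ False at h
    rcases h with h | h <;> exact absurd h (by simp)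

end SC

namespace SC

lemma F_map_adj (hn : 2 ≤ n) {z w : Fin (n ^ 2) × (ZMod 4 ⊕ ZMod 4)}
    (h : (copies (n ^ 2) (sunlet 4)).Adj z w) : (torGrid (2 * n)).Adj (F n z) (F n w) := by
  obtain ⟨i, u⟩ := z; obtain ⟨j, u'⟩ := w
  obtain ⟨hij, h2⟩ := h
  cases (show i = j from hij)
  rw [sunlet, SimpleGraph.fromRel_adj] at h2
  obtain ⟨hne, h2⟩ := h2
  set A := ai n i with hA
  set B := bi n i with hB
  rcases u with k | k <;> rcases u' with m | m
  · change (m = k + 1) ∨ (k = m + 1) at h2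
    rcases h2 with rfl | h2
    · rcases zmod4_cases k with rfl | rfl | rfl | rfl
      · rw [(by decide : (0:ZMod 4) + 1 = 1), F_inl, F_inl, cyc_0, cyc_1, e_col0 B]
        exact tadj_col hn _ _
      · rw [(by decide : (1:ZMod 4) + 1 = 2), F_inl, F_inl, cyc_1, cyc_2, e_col0 A]
        exact tadj_row hn _ _
      · rw [(by decide : (2:ZMod 4) + 1 = 3), F_inl, F_inl, cyc_2, cyc_3, e_col0 B]
        exact (tadj_col hn _ _).symm
      · rw [(by decide : (3:ZMod 4) + 1 = 0), F_inl, F_inl, cyc_3, cyc_0, e_col0 A]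
        exact (tadj_row hn _ _).symm
    · cases (show k = m + 1 from h2)
      rcases zmod4_cases m with rfl | rfl | rfl | rfl
      · rw [(by decide : (0:ZMod 4) + 1 = 1), F_inl, F_inl, cyc_0, cyc_1, e_col0 B]
        exact (tadj_col hn _ _).symm
      · rw [(by decide : (1:ZMod 4) + 1 = 2), F_inl, F_inl, cyc_1, cyc_2, e_col0 A]
        exact (tadj_row hn _ _).symm
      · rw [(by decide : (2:ZMod 4) + 1 = 3), F_inl, F_inl, cyc_2, cyc_3, e_col0 B]
        exact tadj_col hn _ _
      · rw [(by decide : (3:ZMod 4) + 1 = 0), F_inl, F_inl, cyc_3, cyc_0, e_col0 A]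
        exact tadj_row hn _ _
  · change (k = m) ∨ False at h2
    rcases h2 with rfl | h2
    · rcases zmod4_cases k with rfl | rfl | rfl | rfl
      · rw [F_inl, F_inr, cyc_0, lf_0, e_col2 hn B]
        exact (tadj_col hn _ _).symm
      · rw [F_inl, F_inr, cyc_1, lf_1, e_col2 hn A]
        exact (tadj_row hn _ _).symm
      · rw [F_inl, F_inr, cyc_2, lf_2, e_col1 hn B]
        exact tadj_col hn _ _
      · rw [F_inl, F_inr, cyc_3, lf_3, e_col1 hn A]
        exact tadj_row hn _ _
    · exact absurd h2 (by simp)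
  · change False ∨ (m = k) at h2
    rcases h2 with h2 | rfl
    · exact absurd h2 (by simp)
    · rcases zmod4_cases m with rfl | rfl | rfl | rfl
      · rw [F_inl, F_inr, cyc_0, lf_0, e_col2 hn B]
        exact tadj_col hn _ _
      · rw [F_inl, F_inr, cyc_1, lf_1, e_col2 hn A]
        exact tadj_row hn _ _
      · rw [F_inl, F_inr, cyc_2, lf_2, e_col1 hn B]
        exact (tadj_col hn _ _).symm
      · rw [F_inl, F_inr, cyc_3, lf_3, e_col1 hn A]
        exact (tadj_row hn _ _).symm
  · change False ∨ False at h2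
    rcases h2 with h2 | h2 <;> exact absurd h2 (by simp)

def phi (hn : 2 ≤ n) : copies (n ^ 2) (sunlet 4) →g torGrid (2 * n) :=
  ⟨F n, fun h => F_map_adj hn h⟩

end SC

namespace SC

lemma preimage_pair (hn : 2 ≤ n) (p q : ZMod n) (r s : Fin 2) :
    ∃ z1 z2 : Fin (n ^ 2) × (ZMod 4 ⊕ ZMod 4),
      (∃ k, z1 = (z1.1, Sum.inl k)) ∧ (∃ k, z2 = (z2.1, Sum.inr k)) ∧
      ∀ z, F n z = (g n p r, g n q s) ↔ z = z1 ∨ z = z2 := by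
  rcases fin2_cases r with rfl | rfl <;> rcases fin2_cases s with rfl | rfl
  · -- (0,0) : cycle k=0 at (p,q), leaf m=3 at (p-1,q)
    refine ⟨(enc hn p q, Sum.inl 0), (enc hn (p - 1) q, Sum.inr 3), ⟨0, rfl⟩, ⟨3, rfl⟩, ?_⟩
    rintro ⟨i, k | k⟩ <;> constructor
    · intro h
      rcases zmod4_cases k with rfl | rfl | rfl | rfl <;>
        simp only [F_inl, cyc_0, cyc_1, cyc_2, cyc_3, Prod.mk.injEq, g_inj hn] at h <;>
        first
          | exact absurd h.1.2 (by decide)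
          | exact absurd h.2.2 (by decide)
          | (obtain ⟨⟨h1, -⟩, h2, -⟩ := h
             left
             have hi : i = enc hn p q := by rw [← h1, ← h2, enc_ai]
             rw [hi])
    · rintro (h | h) <;> rw [Prod.mk.injEq] at h <;> rcases h with ⟨rfl, h⟩ <;>
        first
          | (cases h; rw [F_inl, cyc_0, ai_enc hn, bi_enc hn])
          | exact absurd h (by simp)
    · intro h
      rcases zmod4_cases k with rfl | rfl | rfl | rfl <;>
        simp only [F_inr, lf_0, lf_1, lf_2, lf_3, Prod.mk.injEq, g_inj hn] at h <;>
        first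
          | exact absurd h.1.2 (by decide)
          | exact absurd h.2.2 (by decide)
          | (obtain ⟨⟨h1, -⟩, h2, -⟩ := h
             right
             have hi : i = enc hn (p - 1) q := by
               rw [← h1, ← h2, add_sub_cancel_right, enc_ai]
             rw [hi])
    · rintro (h | h) <;> rw [Prod.mk.injEq] at h <;> rcases h with ⟨rfl, h⟩ <;>
        first
          | (cases h; rw [F_inr, lf_3, ai_enc hn, bi_enc hn, sub_add_cancel])
          | exact absurd h (by simp)
  · -- (0,1) : cycle k=1 at (p,q), leaf m=0 at (p,q+1)
    refine ⟨(enc hn p q, Sum.inl 1), (enc hn p (q + 1), Sum.inr 0), ⟨1, rfl⟩, ⟨0, rfl⟩, ?_⟩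
    rintro ⟨i, k | k⟩ <;> constructor
    · intro h
      rcases zmod4_cases k with rfl | rfl | rfl | rfl <;>
        simp only [F_inl, cyc_0, cyc_1, cyc_2, cyc_3, Prod.mk.injEq, g_inj hn] at h <;>
        first
          | exact absurd h.1.2 (by decide)
          | exact absurd h.2.2 (by decide)
          | (obtain ⟨⟨h1, -⟩, h2, -⟩ := h
             left
             have hi : i = enc hn p q := by rw [← h1, ← h2, enc_ai]
             rw [hi])
    · rintro (h | h) <;> rw [Prod.mk.injEq] at h <;> rcases h with ⟨rfl, h⟩ <;>
        first
          | (cases h; rw [F_inl, cyc_1, ai_enc hn, bi_enc hn])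
          | exact absurd h (by simp)
    · intro h
      rcases zmod4_cases k with rfl | rfl | rfl | rfl <;>
        simp only [F_inr, lf_0, lf_1, lf_2, lf_3, Prod.mk.injEq, g_inj hn] at h <;>
        first
          | exact absurd h.1.2 (by decide)
          | exact absurd h.2.2 (by decide)
          | (obtain ⟨⟨h1, -⟩, h2, -⟩ := h
             right
             have hi : i = enc hn p (q + 1) := by rw [← h1, ← h2, sub_add_cancel, enc_ai]
             rw [hi])
    · rintro (h | h) <;> rw [Prod.mk.injEq] at h <;> rcases h with ⟨rfl, h⟩ <;>
        first
          | (cases h; rw [F_inr, lf_0, ai_enc hn, bi_enc hn, add_sub_cancel_right])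
          | exact absurd h (by simp)
  · -- (1,0) : cycle k=3 at (p,q), leaf m=2 at (p,q-1)
    refine ⟨(enc hn p q, Sum.inl 3), (enc hn p (q - 1), Sum.inr 2), ⟨3, rfl⟩, ⟨2, rfl⟩, ?_⟩
    rintro ⟨i, k | k⟩ <;> constructor
    · intro h
      rcases zmod4_cases k with rfl | rfl | rfl | rfl <;>
        simp only [F_inl, cyc_0, cyc_1, cyc_2, cyc_3, Prod.mk.injEq, g_inj hn] at h <;>
        first
          | exact absurd h.1.2 (by decide)
          | exact absurd h.2.2 (by decide)
          | (obtain ⟨⟨h1, -⟩, h2, -⟩ := h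
             left
             have hi : i = enc hn p q := by rw [← h1, ← h2, enc_ai]
             rw [hi])
    · rintro (h | h) <;> rw [Prod.mk.injEq] at h <;> rcases h with ⟨rfl, h⟩ <;>
        first
          | (cases h; rw [F_inl, cyc_3, ai_enc hn, bi_enc hn])
          | exact absurd h (by simp)
    · intro h
      rcases zmod4_cases k with rfl | rfl | rfl | rfl <;>
        simp only [F_inr, lf_0, lf_1, lf_2, lf_3, Prod.mk.injEq, g_inj hn] at h <;>
        first
          | exact absurd h.1.2 (by decide)
          | exact absurd h.2.2 (by decide)
          | (obtain ⟨⟨h1, -⟩, h2, -⟩ := h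
             right
             have hi : i = enc hn p (q - 1) := by
               rw [← h1, ← h2, add_sub_cancel_right, enc_ai]
             rw [hi])
    · rintro (h | h) <;> rw [Prod.mk.injEq] at h <;> rcases h with ⟨rfl, h⟩ <;>
        first
          | (cases h; rw [F_inr, lf_2, ai_enc hn, bi_enc hn, sub_add_cancel])
          | exact absurd h (by simp)
  · -- (1,1) : cycle k=2 at (p,q), leaf m=1 at (p+1,q)
    refine ⟨(enc hn p q, Sum.inl 2), (enc hn (p + 1) q, Sum.inr 1), ⟨2, rfl⟩, ⟨1, rfl⟩, ?_⟩
    rintro ⟨i, k | k⟩ <;> constructor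
    · intro h
      rcases zmod4_cases k with rfl | rfl | rfl | rfl <;>
        simp only [F_inl, cyc_0, cyc_1, cyc_2, cyc_3, Prod.mk.injEq, g_inj hn] at h <;>
        first
          | exact absurd h.1.2 (by decide)
          | exact absurd h.2.2 (by decide)
          | (obtain ⟨⟨h1, -⟩, h2, -⟩ := h
             left
             have hi : i = enc hn p q := by rw [← h1, ← h2, enc_ai]
             rw [hi])
    · rintro (h | h) <;> rw [Prod.mk.injEq] at h <;> rcases h with ⟨rfl, h⟩ <;>
        first
          | (cases h; rw [F_inl, cyc_2, ai_enc hn, bi_enc hn])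
          | exact absurd h (by simp)
    · intro h
      rcases zmod4_cases k with rfl | rfl | rfl | rfl <;>
        simp only [F_inr, lf_0, lf_1, lf_2, lf_3, Prod.mk.injEq, g_inj hn] at h <;>
        first
          | exact absurd h.1.2 (by decide)
          | exact absurd h.2.2 (by decide)
          | (obtain ⟨⟨h1, -⟩, h2, -⟩ := h
             right
             have hi : i = enc hn (p + 1) q := by rw [← h1, ← h2, sub_add_cancel, enc_ai]
             rw [hi])
    · rintro (h | h) <;> rw [Prod.mk.injEq] at h <;> rcases h with ⟨rfl, h⟩ <;>
        first
          | (cases h; rw [F_inr, lf_1, ai_enc hn, bi_enc hn, add_sub_cancel_right])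
          | exact absurd h (by simp)

end SC

namespace SC

lemma s01 : (sunlet 4).Adj (Sum.inl 0) (Sum.inl 1) := by
  have := sunlet_adj_cyc 0; rwa [(by decide : (0:ZMod 4) + 1 = 1)] at this
lemma s12 : (sunlet 4).Adj (Sum.inl 1) (Sum.inl 2) := by
  have := sunlet_adj_cyc 1; rwa [(by decide : (1:ZMod 4) + 1 = 2)] at this
lemma s23 : (sunlet 4).Adj (Sum.inl 2) (Sum.inl 3) := by
  have := sunlet_adj_cyc 2; rwa [(by decide : (2:ZMod 4) + 1 = 3)] at this
lemma s30 : (sunlet 4).Adj (Sum.inl 3) (Sum.inl 0) := by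
  have := sunlet_adj_cyc 3; rwa [(by decide : (3:ZMod 4) + 1 = 0)] at this

lemma cover (hn : 2 ≤ n) (u w : ZMod (2 * n) × ZMod (2 * n)) (h : (torGrid (2 * n)).Adj u w) :
    ∃ z z', (copies (n ^ 2) (sunlet 4)).Adj z z' ∧ F n z = u ∧ F n z' = w := by
  rw [torGrid, SimpleGraph.fromRel_adj] at h
  obtain ⟨-, h⟩ := h
  have main : ∀ u w : ZMod (2 * n) × ZMod (2 * n),
      ((u.1 = w.1 ∧ w.2 = u.2 + 1) ∨ (u.2 = w.2 ∧ w.1 = u.1 + 1)) →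
      ∃ z z', (copies (n ^ 2) (sunlet 4)).Adj z z' ∧ F n z = u ∧ F n z' = w := by
    clear h
    intro u w h
    obtain ⟨p, r, hp⟩ := g_surj hn u.1
    obtain ⟨q, s, hq⟩ := g_surj hn u.2
    have hu : u = (g n p r, g n q s) := Prod.ext hp hq
    subst hu
    rcases h with ⟨h1, h2⟩ | ⟨h1, h2⟩
    · have hw : w = (g n p r, g n q s + 1) := Prod.ext h1.symm h2
      subst hw
      rcases fin2_cases r with rfl | rfl <;> rcases fin2_cases s with rfl | rfl
      · exact ⟨(enc hn p q, Sum.inl 0), (enc hn p q, Sum.inl 1), ⟨rfl, s01⟩,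
          by rw [F_inl, cyc_0, ai_enc hn, bi_enc hn],
          by rw [F_inl, cyc_1, ai_enc hn, bi_enc hn, e_col0 q]⟩
      · exact ⟨(enc hn p (q + 1), Sum.inr 0), (enc hn p (q + 1), Sum.inl 0),
          ⟨rfl, (sunlet_adj_pend 0).symm⟩,
          by rw [F_inr, lf_0, ai_enc hn, bi_enc hn, add_sub_cancel_right],
          by rw [F_inl, cyc_0, ai_enc hn, bi_enc hn, e_col1 hn q]⟩
      · exact ⟨(enc hn p q, Sum.inl 3), (enc hn p q, Sum.inl 2), ⟨rfl, s23.symm⟩,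
          by rw [F_inl, cyc_3, ai_enc hn, bi_enc hn],
          by rw [F_inl, cyc_2, ai_enc hn, bi_enc hn, e_col0 q]⟩
      · exact ⟨(enc hn p q, Sum.inl 2), (enc hn p q, Sum.inr 2), ⟨rfl, sunlet_adj_pend 2⟩,
          by rw [F_inl, cyc_2, ai_enc hn, bi_enc hn],
          by rw [F_inr, lf_2, ai_enc hn, bi_enc hn, e_col1 hn q]⟩
    · have hw : w = (g n p r + 1, g n q s) := Prod.ext h2 h1.symm
      subst hw
      rcases fin2_cases r with rfl | rfl <;> rcases fin2_cases s with rfl | rfl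
      · exact ⟨(enc hn p q, Sum.inl 0), (enc hn p q, Sum.inl 3), ⟨rfl, s30.symm⟩,
          by rw [F_inl, cyc_0, ai_enc hn, bi_enc hn],
          by rw [F_inl, cyc_3, ai_enc hn, bi_enc hn, e_col0 p]⟩
      · exact ⟨(enc hn p q, Sum.inl 1), (enc hn p q, Sum.inl 2), ⟨rfl, s12⟩,
          by rw [F_inl, cyc_1, ai_enc hn, bi_enc hn],
          by rw [F_inl, cyc_2, ai_enc hn, bi_enc hn, e_col0 p]⟩
      · exact ⟨(enc hn p q, Sum.inl 3), (enc hn p q, Sum.inr 3), ⟨rfl, sunlet_adj_pend 3⟩,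
          by rw [F_inl, cyc_3, ai_enc hn, bi_enc hn],
          by rw [F_inr, lf_3, ai_enc hn, bi_enc hn, e_col1 hn p]⟩
      · exact ⟨(enc hn (p + 1) q, Sum.inr 1), (enc hn (p + 1) q, Sum.inl 1),
          ⟨rfl, (sunlet_adj_pend 1).symm⟩,
          by rw [F_inr, lf_1, ai_enc hn, bi_enc hn, add_sub_cancel_right],
          by rw [F_inl, cyc_1, ai_enc hn, bi_enc hn, e_col1 hn p]⟩
  rcases h with h | h
  · exact main u w h
  · obtain ⟨z, z', ha, h1e, h2e⟩ := main w u h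
    exact ⟨z', z, ha.symm, h2e, h1e⟩

end SC

namespace SC

lemma idx_eq (hn : 2 ≤ n) {i j : Fin (n ^ 2)} (h1 : ai n i = ai n j) (h2 : bi n i = bi n j) :
    i = j := by
  rw [← enc_ai hn i, h1, h2, enc_ai]

lemma aux (hn : 2 ≤ n) (i j : Fin (n ^ 2)) (m k : ZMod 4) (y : ZMod 4 ⊕ ZMod 4)
    (hnb : (sunlet 4).Adj (Sum.inl k) y)
    (h1 : F n (i, Sum.inr m) = F n (j, Sum.inl k))
    (h2 : F n (i, Sum.inl m) = F n (j, y)) : False := by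
  haveI : Fact (1 < n) := ⟨by omega⟩
  have hone : (1 : ZMod n) ≠ 0 := one_ne_zero
  rcases zmod4_cases m with rfl | rfl | rfl | rfl <;>
    rcases zmod4_cases k with rfl | rfl | rfl | rfl <;>
    simp only [F_inl, F_inr, cyc_0, cyc_1, cyc_2, cyc_3, lf_0, lf_1, lf_2, lf_3,
      Prod.mk.injEq, g_inj hn] at h1 <;>
    first
    | exact absurd h1.1.2 (by decide)
    | exact absurd h1.2.2 (by decide)
    | (rcases sunlet_nbr_inl hnb with rfl | rfl | rfl <;>
       simp only [show (0:ZMod 4)+1 = 1 from by decide, show (0:ZMod 4)-1 = 3 from by decide,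
         show (1:ZMod 4)+1 = 2 from by decide, show (1:ZMod 4)-1 = 0 from by decide,
         show (2:ZMod 4)+1 = 3 from by decide, show (2:ZMod 4)-1 = 1 from by decide,
         show (3:ZMod 4)+1 = 0 from by decide, show (3:ZMod 4)-1 = 2 from by decide,
         F_inl, F_inr, cyc_0, cyc_1, cyc_2, cyc_3, lf_0, lf_1, lf_2, lf_3,
         Prod.mk.injEq, g_inj hn] at h2 <;>
       first
       | exact absurd h2.1.2 (by decide)
       | exact absurd h2.2.2 (by decide)
       | exact absurd (sub_eq_self.mp (h1.2.1.trans h2.2.1.symm)) hone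
       | exact absurd (sub_eq_self.mp (h1.1.1.trans h2.1.1.symm)) hone
       | exact absurd (add_eq_left.mp (h1.2.1.trans h2.2.1.symm)) hone
       | exact absurd (add_eq_left.mp (h1.1.1.trans h2.1.1.symm)) hone)

lemma key (hn : 2 ≤ n) (z1 w1 z2 w2 : Fin (n ^ 2) × (ZMod 4 ⊕ ZMod 4))
    (a1 : (copies (n ^ 2) (sunlet 4)).Adj z1 w1) (a2 : (copies (n ^ 2) (sunlet 4)).Adj z2 w2)
    (h1 : F n z1 = F n z2) (h2 : F n w1 = F n w2) : z1 = z2 ∧ w1 = w2 := by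
  haveI : Fact (1 < n) := ⟨by omega⟩
  have hone : (1 : ZMod n) ≠ 0 := one_ne_zero
  obtain ⟨i, x⟩ := z1; obtain ⟨i1, y1⟩ := w1; obtain ⟨j, x2⟩ := z2; obtain ⟨j2, y2⟩ := w2
  obtain ⟨hi1, n1⟩ := a1
  obtain ⟨hj2, n2⟩ := a2
  cases hi1; cases hj2
  rcases x with k | m <;> rcases x2 with k' | m'
  · -- both cycle vertices
    rcases zmod4_cases k with rfl | rfl | rfl | rfl <;>
      rcases zmod4_cases k' with rfl | rfl | rfl | rfl <;>
      simp only [F_inl, cyc_0, cyc_1, cyc_2, cyc_3, Prod.mk.injEq, g_inj hn] at h1 <;>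
      first
      | exact absurd h1.1.2 (by decide)
      | exact absurd h1.2.2 (by decide)
      | (obtain ⟨⟨e1, -⟩, e2, -⟩ := h1
         cases idx_eq hn e1 e2
         refine ⟨rfl, ?_⟩
         rcases sunlet_nbr_inl n1 with rfl | rfl | rfl <;>
           rcases sunlet_nbr_inl n2 with rfl | rfl | rfl <;>
           first
           | rfl
           | (simp only [show (0:ZMod 4)+1 = 1 from by decide, show (0:ZMod 4)-1 = 3 from by decide,
                show (1:ZMod 4)+1 = 2 from by decide, show (1:ZMod 4)-1 = 0 from by decide,
                show (2:ZMod 4)+1 = 3 from by decide, show (2:ZMod 4)-1 = 1 from by decide,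
                show (3:ZMod 4)+1 = 0 from by decide, show (3:ZMod 4)-1 = 2 from by decide,
                F_inl, F_inr, cyc_0, cyc_1, cyc_2, cyc_3, lf_0, lf_1, lf_2, lf_3,
                Prod.mk.injEq, g_inj hn] at h2
              first
              | exact absurd h2.1.2 (by decide)
              | exact absurd h2.2.2 (by decide)
              | exact absurd (sub_eq_self.mp h2.2.1.symm) hone
              | exact absurd (sub_eq_self.mp h2.2.1) hone
              | exact absurd (sub_eq_self.mp h2.1.1.symm) hone
              | exact absurd (sub_eq_self.mp h2.1.1) hone
              | exact absurd (add_eq_left.mp h2.2.1.symm) hone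
              | exact absurd (add_eq_left.mp h2.2.1) hone
              | exact absurd (add_eq_left.mp h2.1.1.symm) hone
              | exact absurd (add_eq_left.mp h2.1.1) hone))
  · -- cycle vs leaf : impossible
    cases sunlet_nbr_inr n2
    exact (aux hn j i m' k y1 n1 h1.symm h2.symm).elim
  · -- leaf vs cycle : impossible
    cases sunlet_nbr_inr n1
    exact (aux hn i j m k' y2 n2 h1 h2).elim
  · -- both leaves
    cases sunlet_nbr_inr n1
    cases sunlet_nbr_inr n2
    rcases zmod4_cases m with rfl | rfl | rfl | rfl <;>
      rcases zmod4_cases m' with rfl | rfl | rfl | rfl <;>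
      simp only [F_inr, lf_0, lf_1, lf_2, lf_3, Prod.mk.injEq, g_inj hn] at h1 <;>
      first
      | exact absurd h1.1.2 (by decide)
      | exact absurd h1.2.2 (by decide)
      | (obtain ⟨⟨e1, -⟩, e2, -⟩ := h1
         first
         | (cases idx_eq hn e1 (sub_left_inj.mp e2); exact ⟨rfl, rfl⟩)
         | (cases idx_eq hn (sub_left_inj.mp e1) e2; exact ⟨rfl, rfl⟩)
         | (cases idx_eq hn e1 ((add_left_inj _).mp e2); exact ⟨rfl, rfl⟩)
         | (cases idx_eq hn ((add_left_inj _).mp e1) e2; exact ⟨rfl, rfl⟩))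

end SC

open SC

/-- For `n ≥ 2` there is a homomorphism from the disjoint union of `n²` copies of the
sunlet `S¹_4` to `C_{2n} □ C_{2n}` which is bijective on edges, 2-to-1 on vertices,
and injective on the cycle vertices of the sunlets. -/
theorem sunlet_covering_squares (n : ℕ) (hn : 2 ≤ n) :
    ∃ φ : copies (n ^ 2) (sunlet 4) →g torGrid (2 * n),
      Function.Bijective φ.mapEdgeSet ∧
      (∀ v : ZMod (2 * n) × ZMod (2 * n),
        Nat.card (⇑φ ⁻¹' {v} : Set (Fin (n ^ 2) × (ZMod 4 ⊕ ZMod 4))) = 2) ∧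
      Function.Injective (fun ik : Fin (n ^ 2) × ZMod 4 => φ (ik.1, Sum.inl ik.2)) := by

  refine ⟨phi hn, ⟨?_, ?_⟩, ?_, ?_⟩
  · -- injectivity on edges
    have hinj : ∀ e1 e2 : Sym2 (Fin (n ^ 2) × (ZMod 4 ⊕ ZMod 4)),
        e1 ∈ (copies (n ^ 2) (sunlet 4)).edgeSet → e2 ∈ (copies (n ^ 2) (sunlet 4)).edgeSet →
        Sym2.map (F n) e1 = Sym2.map (F n) e2 → e1 = e2 := by
      intro e1 e2
      refine Sym2.inductionOn₂ e1 e2 ?_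
      intro u w u' w' he1 he2 h
      rw [Sym2.map_pair_eq, Sym2.map_pair_eq, Sym2.eq_iff] at h
      rw [SimpleGraph.mem_edgeSet] at he1 he2
      rcases h with ⟨ha, hb⟩ | ⟨ha, hb⟩
      · obtain ⟨e1, e2⟩ := key hn u w u' w' he1 he2 ha hb
        rw [e1, e2]
      · obtain ⟨e1, e2⟩ := key hn u w w' u' he1 he2.symm ha hb
        rw [e1, e2, Sym2.eq_swap]
    rintro ⟨e1, he1⟩ ⟨e2, he2⟩ h
    exact Subtype.ext (hinj e1 e2 he1 he2 (congrArg Subtype.val h))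
  · -- surjectivity on edges
    rintro ⟨e, he⟩
    have main : ∀ e : Sym2 (ZMod (2 * n) × ZMod (2 * n)), e ∈ (torGrid (2 * n)).edgeSet →
        ∃ e' ∈ (copies (n ^ 2) (sunlet 4)).edgeSet, Sym2.map (F n) e' = e := by
      intro e
      refine Sym2.inductionOn e ?_
      intro u w he
      rw [SimpleGraph.mem_edgeSet] at he
      obtain ⟨z, z', ha, hu, hw⟩ := cover hn u w he
      exact ⟨s(z, z'), ha, by rw [Sym2.map_pair_eq, hu, hw]⟩
    obtain ⟨e', he', hme⟩ := main e he
    exact ⟨⟨e', he'⟩, Subtype.ext hme⟩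
  · -- two-to-one
    intro v
    obtain ⟨p, r, hp⟩ := g_surj hn v.1
    obtain ⟨q, s, hq⟩ := g_surj hn v.2
    have hv : v = (g n p r, g n q s) := Prod.ext hp hq
    obtain ⟨z1, z2, ⟨k1, hk1⟩, ⟨k2, hk2⟩, hz⟩ := preimage_pair hn p q r s
    have hne : z1 ≠ z2 := by
      intro h
      have := congrArg Prod.snd (hk1.symm.trans (h.trans hk2))
      simp at this
    have hset : (⇑(phi hn) ⁻¹' {v} : Set (Fin (n ^ 2) × (ZMod 4 ⊕ ZMod 4))) = {z1, z2} := by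
      ext z
      simp only [Set.mem_preimage, Set.mem_singleton_iff, Set.mem_insert_iff]
      rw [hv]
      exact hz z
    rw [hset, Nat.card_coe_set_eq, Set.ncard_pair hne]
  · -- injective on cycle vertices
    intro a b h
    obtain ⟨p, r, hp⟩ := g_surj hn (F n (b.1, Sum.inl b.2)).1
    obtain ⟨q, s, hq⟩ := g_surj hn (F n (b.1, Sum.inl b.2)).2
    have hv : F n (b.1, Sum.inl b.2) = (g n p r, g n q s) := Prod.ext hp hq
    obtain ⟨z1, z2, ⟨k1, hk1⟩, ⟨k2, hk2⟩, hz⟩ := preimage_pair hn p q r s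
    have hb := (hz (b.1, Sum.inl b.2)).mp hv
    have ha := (hz (a.1, Sum.inl a.2)).mp ((show F n (a.1, Sum.inl a.2) = F n (b.1, Sum.inl b.2) from h).trans hv)
    have elim2 : ∀ x : Fin (n ^ 2) × ZMod 4, ¬ ((x.1, Sum.inl x.2) = z2) := by
      intro x hx
      have := congrArg Prod.snd (hx.trans hk2)
      simp at this
    rcases ha with ha | ha
    · rcases hb with hb | hb
      · have heq : (a.1, Sum.inl a.2) = (b.1, Sum.inl b.2) := ha.trans hb.symm
        have h1 := congrArg Prod.fst heq
        have h2 := congrArg Prod.snd heq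
        exact Prod.ext h1 (by simpa using h2)
      · exact absurd hb (elim2 b)
    · exact absurd ha (elim2 a)
end

section
/- For every integer n ≥ 2, the edge set of the toroidal grid C_{2n} □ C_{2n} can be partitioned into n pairwise edge-disjoint subgraphs, each of which is isomorphic to the sunlet graph S¹_{4n}. -/
namespace Staircase

variable {n : ℕ}

def stair (n : ℕ) (d : ZMod (2*n)) (m : ℕ) : ZMod (2*n) × ZMod (2*n) :=
  ((((m+1)/2 : ℕ) : ZMod (2*n)), (((m/2 : ℕ)) : ZMod (2*n)) + d)

def leaf (n : ℕ) (d : ZMod (2*n)) (m : ℕ) : ZMod (2*n) × ZMod (2*n) :=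
  if m % 2 = 0 then ((((m/2 : ℕ)) : ZMod (2*n)), ((m/2 : ℕ) : ZMod (2*n)) + d + 1)
  else ((((m/2 + 2 : ℕ)) : ZMod (2*n)), ((m/2 : ℕ) : ZMod (2*n)) + d)

def phi (n : ℕ) (d : ZMod (2*n)) : ZMod (4*n) ⊕ ZMod (4*n) → ZMod (2*n) × ZMod (2*n)
  | Sum.inl j => stair n d j.val
  | Sum.inr j => leaf n d j.val

lemma cast_mul_add (q s : ℕ) : ((2*n*q + s : ℕ) : ZMod (2*n)) = (s : ZMod (2*n)) := by
  rw [Nat.cast_add, Nat.cast_mul, ZMod.natCast_self, zero_mul, zero_add]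

lemma decomp (m : ℕ) : ∃ Q, m = 4*Q + m % (4*n) ∧ ((2*Q : ℕ) : ZMod (2*n)) = 0 := by
  refine ⟨n * (m / (4*n)), ?_, ?_⟩
  · have h := Nat.div_add_mod m (4*n)
    have : 4 * (n * (m / (4*n))) = 4*n*(m/(4*n)) := by ring
    omega
  · have : (2 * (n * (m / (4*n))) : ℕ) = 2*n*(m/(4*n)) + 0 := by ring
    rw [this, cast_mul_add]
    simp

lemma stair_mod (d : ZMod (2*n)) (m : ℕ) :
    stair n d (m % (4*n)) = stair n d m := by
  obtain ⟨Q, hm, hQ⟩ := decomp (n := n) m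
  have h1 : (m+1)/2 = 2*Q + (m % (4*n) + 1)/2 := by omega
  have h2 : m/2 = 2*Q + (m % (4*n))/2 := by omega
  unfold stair
  rw [h1, h2]
  push_cast [hQ] at *
  simp
lemma leaf_mod (d : ZMod (2*n)) (m : ℕ) :
    leaf n d (m % (4*n)) = leaf n d m := by
  obtain ⟨Q, hm, hQ⟩ := decomp (n := n) m
  have h0 : m % (4*n) % 2 = m % 2 := by omega
  have h2 : m/2 = 2*Q + (m % (4*n))/2 := by omega
  have h3 : m/2 + 2 = 2*Q + ((m % (4*n))/2 + 2) := by omega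
  unfold leaf
  rw [h0, h3, h2]
  push_cast [hQ] at *
  rcases Nat.mod_two_eq_zero_or_one m with h | h <;> simp [h]

lemma stair_even (d : ZMod (2*n)) {m : ℕ} (hm : m % 2 = 0) :
    stair n d m = (((m/2 : ℕ) : ZMod (2*n)), ((m/2 : ℕ) : ZMod (2*n)) + d) := by
  unfold stair
  rw [show (m+1)/2 = m/2 by omega]

lemma stair_odd (d : ZMod (2*n)) {m : ℕ} (hm : m % 2 = 1) :
    stair n d m = (((m/2 : ℕ) : ZMod (2*n)) + 1, ((m/2 : ℕ) : ZMod (2*n)) + d) := by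
  unfold stair
  rw [show (m+1)/2 = m/2 + 1 by omega]
  push_cast
  rfl

lemma leaf_even (d : ZMod (2*n)) {m : ℕ} (hm : m % 2 = 0) :
    leaf n d m = (((m/2 : ℕ) : ZMod (2*n)), ((m/2 : ℕ) : ZMod (2*n)) + d + 1) := by
  unfold leaf; rw [if_pos hm]

lemma leaf_odd (d : ZMod (2*n)) {m : ℕ} (hm : m % 2 = 1) :
    leaf n d m = (((m/2 : ℕ) : ZMod (2*n)) + 2, ((m/2 : ℕ) : ZMod (2*n)) + d) := by
  unfold leaf; rw [if_neg (by omega)]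
  push_cast
  rfl

lemma cast_ne_zero (hn : 2 ≤ n) {c : ℕ} (h1 : 0 < c) (h2 : c < 2*n) :
    (c : ZMod (2*n)) ≠ 0 := by
  rw [Ne, ZMod.natCast_eq_zero_iff]
  intro hdvd
  exact absurd (Nat.le_of_dvd h1 hdvd) (by omega)

lemma cast_inj_of_lt (hn : 2 ≤ n) {a b : ℕ} (ha : a < 2*n) (hb : b < 2*n)
    (h : (a : ZMod (2*n)) = b) : a = b := by
  haveI : NeZero (2*n) := ⟨by omega⟩
  have h2 := congrArg ZMod.val h
  rwa [ZMod.val_cast_of_lt ha, ZMod.val_cast_of_lt hb] at h2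

lemma one_ne (hn : 2 ≤ n) : (1 : ZMod (2*n)) ≠ 0 := by
  have := cast_ne_zero hn (c := 1) (by norm_num) (by omega)
  simpa using this

lemma two_ne (hn : 2 ≤ n) : (2 : ZMod (2*n)) ≠ 0 := by
  have := cast_ne_zero hn (c := 2) (by norm_num) (by omega)
  simpa using this

lemma three_ne (hn : 2 ≤ n) : (3 : ZMod (2*n)) ≠ 0 := by
  have := cast_ne_zero hn (c := 3) (by norm_num) (by omega)
  simpa using this

lemma adj_stair_succ (hn : 2 ≤ n) (d : ZMod (2*n)) (m : ℕ) :
    (torGrid (2*n)).Adj (stair n d m) (stair n d (m+1)) := by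
  rw [torGrid, SimpleGraph.fromRel_adj]
  rcases Nat.mod_two_eq_zero_or_one m with h | h
  · rw [stair_even d h, stair_odd d (by omega : (m+1) % 2 = 1),
      show (m+1)/2 = m/2 by omega]
    refine ⟨?_, Or.inl (Or.inr ⟨rfl, rfl⟩)⟩
    intro hc
    have := congrArg Prod.fst hc
    simp only [left_eq_add] at this
    exact one_ne hn (by linear_combination this)
  · rw [stair_odd d h, stair_even d (by omega : (m+1) % 2 = 0),
      show (m+1)/2 = m/2 + 1 by omega]
    push_cast
    refine ⟨?_, Or.inl (Or.inl ⟨rfl, by ring⟩)⟩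
    intro hc
    have := congrArg Prod.snd hc
    simp only at this
    exact one_ne hn (by linear_combination -this)

lemma adj_stair_leaf (hn : 2 ≤ n) (d : ZMod (2*n)) (m : ℕ) :
    (torGrid (2*n)).Adj (stair n d m) (leaf n d m) := by
  rw [torGrid, SimpleGraph.fromRel_adj]
  rcases Nat.mod_two_eq_zero_or_one m with h | h
  · rw [stair_even d h, leaf_even d h]
    refine ⟨?_, Or.inl (Or.inl ⟨rfl, rfl⟩)⟩
    intro hc
    have := congrArg Prod.snd hc
    simp only at this
    exact one_ne hn (by linear_combination -this)
  · rw [stair_odd d h, leaf_odd d h]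
    refine ⟨?_, Or.inl (Or.inr ⟨rfl, by ring⟩)⟩
    intro hc
    have := congrArg Prod.fst hc
    simp only at this
    exact one_ne hn (by linear_combination -this)

lemma phi_inl (d : ZMod (2*n)) (j : ZMod (4*n)) : phi n d (Sum.inl j) = stair n d j.val := rfl

lemma phi_inr (d : ZMod (2*n)) (j : ZMod (4*n)) : phi n d (Sum.inr j) = leaf n d j.val := rfl

lemma phi_inl_add_one (hn : 2 ≤ n) (d : ZMod (2*n)) (j : ZMod (4*n)) :
    phi n d (Sum.inl (j+1)) = stair n d (j.val + 1) := by
  haveI : NeZero (4*n) := ⟨by omega⟩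
  haveI : Fact (1 < 4*n) := ⟨by omega⟩
  rw [phi_inl, ZMod.val_add, ZMod.val_one, stair_mod]

lemma phi_hom (hn : 2 ≤ n) (d : ZMod (2*n)) {a b : ZMod (4*n) ⊕ ZMod (4*n)}
    (hab : (sunlet (4*n)).Adj a b) :
    (torGrid (2*n)).Adj (phi n d a) (phi n d b) := by
  rw [sunlet, SimpleGraph.fromRel_adj] at hab
  obtain ⟨hne, h | h⟩ := hab
  · match a, b with
    | Sum.inl x, Sum.inl y =>
      subst h
      rw [phi_inl, phi_inl_add_one hn]
      exact adj_stair_succ hn d x.val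
    | Sum.inl x, Sum.inr y =>
      subst h
      exact adj_stair_leaf hn d x.val
  · match a, b with
    | Sum.inl x, Sum.inl y =>
      subst h
      rw [phi_inl_add_one hn, phi_inl]
      exact (adj_stair_succ hn d y.val).symm
    | Sum.inr x, Sum.inl y =>
      subst h
      exact (adj_stair_leaf hn d y.val).symm

/-- diagonal invariant -/
def dg (u : ZMod (2*n) × ZMod (2*n)) : ZMod (2*n) := u.2 - u.1

lemma dg_stair (d : ZMod (2*n)) (m : ℕ) :
    dg (stair n d m) = d - ((m % 2 : ℕ) : ZMod (2*n)) := by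
  rcases Nat.mod_two_eq_zero_or_one m with h | h
  · rw [stair_even d h, h]; simp only [dg]; push_cast; ring
  · rw [stair_odd d h, h]; simp only [dg]; push_cast; ring

lemma dg_leaf (d : ZMod (2*n)) (m : ℕ) :
    dg (leaf n d m) = d + 1 - 3 * ((m % 2 : ℕ) : ZMod (2*n)) := by
  rcases Nat.mod_two_eq_zero_or_one m with h | h
  · rw [leaf_even d h, h]; simp only [dg]; push_cast; ring
  · rw [leaf_odd d h, h]; simp only [dg]; push_cast; ring

lemma phi_inj (hn : 2 ≤ n) (d : ZMod (2*n)) : Function.Injective (phi n d) := by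
  haveI : NeZero (4*n) := ⟨by omega⟩
  intro a b h
  have hdg := congrArg dg h
  have hsnd := congrArg Prod.snd h
  match a, b with
  | Sum.inl x, Sum.inl y =>
    rw [phi_inl, phi_inl, dg_stair, dg_stair] at hdg
    have hpar : x.val % 2 = y.val % 2 := by
      rcases Nat.mod_two_eq_zero_or_one x.val with h1 | h1 <;>
        rcases Nat.mod_two_eq_zero_or_one y.val with h2 | h2 <;>
        rw [h1, h2] at hdg ⊢ <;> push_cast at hdg <;> first
          | rfl
          | exact absurd (by linear_combination hdg) (one_ne hn)
          | exact absurd (by linear_combination -hdg) (one_ne hn)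
    rw [phi_inl, phi_inl] at hsnd
    simp only [stair] at hsnd
    have h2 : ((x.val / 2 : ℕ) : ZMod (2*n)) = ((y.val / 2 : ℕ) : ZMod (2*n)) := by
      have := congrArg (fun z => z - d) hsnd
      simpa using this
    have hv : x.val / 2 = y.val / 2 :=
      cast_inj_of_lt hn (by have := x.val_lt; omega) (by have := y.val_lt; omega) h2
    have : x.val = y.val := by omega
    exact congrArg Sum.inl (ZMod.val_injective _ this)
  | Sum.inr x, Sum.inr y =>
    rw [phi_inr, phi_inr, dg_leaf, dg_leaf] at hdg
    have hpar : x.val % 2 = y.val % 2 := by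
      rcases Nat.mod_two_eq_zero_or_one x.val with h1 | h1 <;>
        rcases Nat.mod_two_eq_zero_or_one y.val with h2 | h2 <;>
        rw [h1, h2] at hdg ⊢ <;> push_cast at hdg <;> first
          | rfl
          | exact absurd (by linear_combination hdg) (three_ne hn)
          | exact absurd (by linear_combination -hdg) (three_ne hn)
    rw [phi_inr, phi_inr] at hsnd
    have h2 : ((x.val / 2 : ℕ) : ZMod (2*n)) = ((y.val / 2 : ℕ) : ZMod (2*n)) := by
      rcases Nat.mod_two_eq_zero_or_one x.val with h1 | h1 <;>
        [rw [leaf_even d h1, leaf_even d (hpar ▸ h1)] at hsnd;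
         rw [leaf_odd d h1, leaf_odd d (hpar ▸ h1)] at hsnd] <;>
      · have := congrArg (fun z => z - d) hsnd
        simp only at this
        first
          | simpa using this
          | (have := congrArg (fun z => z - 1) this; simpa using this)
    have hv : x.val / 2 = y.val / 2 :=
      cast_inj_of_lt hn (by have := x.val_lt; omega) (by have := y.val_lt; omega) h2
    have : x.val = y.val := by omega
    exact congrArg Sum.inr (ZMod.val_injective _ this)
  | Sum.inl x, Sum.inr y =>
    exfalso
    rw [phi_inl, phi_inr, dg_stair, dg_leaf] at hdg
    rcases Nat.mod_two_eq_zero_or_one x.val with h1 | h1 <;>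
      rcases Nat.mod_two_eq_zero_or_one y.val with h2 | h2 <;>
      rw [h1, h2] at hdg <;> push_cast at hdg <;> first
        | exact absurd (by linear_combination hdg) (one_ne hn)
        | exact absurd (by linear_combination -hdg) (one_ne hn)
        | exact absurd (by linear_combination hdg) (two_ne hn)
        | exact absurd (by linear_combination -hdg) (two_ne hn)
  | Sum.inr x, Sum.inl y =>
    exfalso
    rw [phi_inl, phi_inr, dg_stair, dg_leaf] at hdg
    rcases Nat.mod_two_eq_zero_or_one x.val with h1 | h1 <;>
      rcases Nat.mod_two_eq_zero_or_one y.val with h2 | h2 <;>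
      rw [h1, h2] at hdg <;> push_cast at hdg <;> first
        | exact absurd (by linear_combination hdg) (one_ne hn)
        | exact absurd (by linear_combination -hdg) (one_ne hn)
        | exact absurd (by linear_combination hdg) (two_ne hn)
        | exact absurd (by linear_combination -hdg) (two_ne hn)

def phiHom (n : ℕ) (hn : 2 ≤ n) (d : ZMod (2*n)) : sunlet (4*n) →g torGrid (2*n) where
  toFun := phi n d
  map_rel' := fun h => phi_hom hn d h

lemma phiHom_coe (hn : 2 ≤ n) (d : ZMod (2*n)) : ⇑(phiHom n hn d) = phi n d := rfl

/-- one copy of the sunlet inside the torus grid -/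
def cop (n : ℕ) (hn : 2 ≤ n) (d : ZMod (2*n)) : (torGrid (2*n)).Subgraph :=
  SimpleGraph.Subgraph.map (phiHom n hn d) ⊤

lemma cop_adj (hn : 2 ≤ n) (d : ZMod (2*n)) {u v : ZMod (2*n) × ZMod (2*n)} :
    (cop n hn d).Adj u v ↔
      ∃ a b, (sunlet (4*n)).Adj a b ∧ phi n d a = u ∧ phi n d b = v := by
  constructor
  · rintro ⟨a, b, hab, ha, hb⟩
    exact ⟨a, b, hab, ha, hb⟩
  · rintro ⟨a, b, hab, ha, hb⟩
    exact ⟨a, b, hab, ha, hb⟩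

lemma cop_verts (hn : 2 ≤ n) (d : ZMod (2*n)) :
    (cop n hn d).verts = Set.range (phi n d) := by
  simp [cop, phiHom_coe]

/-- the second endpoint of an edge starting at `w`: up or right -/
def pt (w : ZMod (2*n) × ZMod (2*n)) (b : Bool) : ZMod (2*n) × ZMod (2*n) :=
  if b then (w.1, w.2+1) else (w.1+1, w.2)

def sg (u : ZMod (2*n) × ZMod (2*n)) : ZMod (2*n) := u.1 + u.2

lemma sg_pt (w : ZMod (2*n) × ZMod (2*n)) (b : Bool) : sg (pt w b) = sg w + 1 := by
  cases b
  · show sg (w.1 + 1, w.2) = sg w + 1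
    simp only [sg]; ring
  · show sg (w.1, w.2 + 1) = sg w + 1
    simp only [sg]; ring

lemma pt_cancel (hn : 2 ≤ n) {w w' : ZMod (2*n) × ZMod (2*n)} {b b' : Bool}
    (h : s(w, pt w b) = s(w', pt w' b')) : w = w' := by
  rw [Sym2.eq_iff] at h
  rcases h with ⟨h1, h2⟩ | ⟨h1, h2⟩
  · exact h1
  · exfalso
    have e1 := congrArg sg h1
    have e2 := congrArg sg h2
    rw [sg_pt] at e1 e2
    exact two_ne hn (by linear_combination e2 - e1)

lemma key0 (hn : 2 ≤ n) (d : ZMod (2*n)) (x : ZMod (4*n)) :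
    ∃ w b, s(phi n d (Sum.inl x), phi n d (Sum.inl (x+1))) = s(w, pt w b) ∧
      (dg w = d ∨ dg w = d - 1) := by
  rw [phi_inl_add_one hn, phi_inl]
  set k : ZMod (2*n) := ((x.val/2 : ℕ) : ZMod (2*n)) with hk
  rcases Nat.mod_two_eq_zero_or_one x.val with h1 | h1
  · rw [stair_even d h1, stair_odd d (by omega : (x.val + 1) % 2 = 1),
      show (x.val+1)/2 = x.val/2 by omega]
    refine ⟨(k, k + d), false, ?_, Or.inl ?_⟩
    · rfl
    · simp only [dg]; ring
  · rw [stair_odd d h1, stair_even d (by omega : (x.val + 1) % 2 = 0),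
      show (x.val+1)/2 = x.val/2 + 1 by omega]
    refine ⟨(k + 1, k + d), true, ?_, Or.inr ?_⟩
    · have : ((x.val/2 + 1 : ℕ) : ZMod (2*n)) = k + 1 := by push_cast; rfl
      rw [this, show k + 1 + d = k + d + 1 by ring]
      rfl
    · simp only [dg]; ring

lemma key1 (hn : 2 ≤ n) (d : ZMod (2*n)) (x : ZMod (4*n)) :
    ∃ w b, s(phi n d (Sum.inl x), phi n d (Sum.inr x)) = s(w, pt w b) ∧
      (dg w = d ∨ dg w = d - 1) := by
  rw [phi_inl, phi_inr]
  set k : ZMod (2*n) := ((x.val/2 : ℕ) : ZMod (2*n)) with hk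
  rcases Nat.mod_two_eq_zero_or_one x.val with h1 | h1
  · rw [stair_even d h1, leaf_even d h1]
    refine ⟨(k, k + d), true, ?_, Or.inl ?_⟩
    · rfl
    · simp only [dg]; ring
  · rw [stair_odd d h1, leaf_odd d h1]
    refine ⟨(k + 1, k + d), false, ?_, Or.inr ?_⟩
    · rw [show k + 2 = k + 1 + 1 by ring]
      rfl
    · simp only [dg]; ring

lemma key (hn : 2 ≤ n) (d : ZMod (2*n)) {u v : ZMod (2*n) × ZMod (2*n)}
    (h : (cop n hn d).Adj u v) :
    ∃ w b, s(u,v) = s(w, pt w b) ∧ (dg w = d ∨ dg w = d - 1) := by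
  obtain ⟨a, b, hab, rfl, rfl⟩ := (cop_adj hn d).mp h
  rw [sunlet, SimpleGraph.fromRel_adj] at hab
  obtain ⟨hne, hr | hr⟩ := hab
  · match a, b with
    | Sum.inl x, Sum.inl y =>
      subst hr
      exact key0 hn d x
    | Sum.inl x, Sum.inr y =>
      subst hr
      exact key1 hn d x
  · match a, b with
    | Sum.inl x, Sum.inl y =>
      subst hr
      rw [Sym2.eq_swap]
      exact key0 hn d y
    | Sum.inr x, Sum.inl y =>
      subst hr
      rw [Sym2.eq_swap]
      exact key1 hn d y

lemma uniq (hn : 2 ≤ n) {i i' : ℕ} (hi : i < n) (hi' : i' < n)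
    {u v : ZMod (2*n) × ZMod (2*n)}
    (h : (cop n hn ((2*i : ℕ) : ZMod (2*n))).Adj u v)
    (h' : (cop n hn ((2*i' : ℕ) : ZMod (2*n))).Adj u v) : i = i' := by
  obtain ⟨w, b, hw, hd⟩ := key hn _ h
  obtain ⟨w', b', hw', hd'⟩ := key hn _ h'
  rw [hw] at hw'
  have hww : w = w' := pt_cancel hn hw'
  subst hww
  rcases hd with h1 | h1 <;> rcases hd' with h2 | h2 <;> rw [h1] at h2
  · have := cast_inj_of_lt hn (by omega) (by omega) h2; omega
  · have e : ((2*i+1 : ℕ) : ZMod (2*n)) = ((2*i' : ℕ) : ZMod (2*n)) := by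
      push_cast; push_cast at h2; linear_combination h2
    have := cast_inj_of_lt hn (by omega) (by omega) e; omega
  · have e : ((2*i : ℕ) : ZMod (2*n)) = ((2*i'+1 : ℕ) : ZMod (2*n)) := by
      push_cast; push_cast at h2; linear_combination h2
    have := cast_inj_of_lt hn (by omega) (by omega) e; omega
  · have e : ((2*i : ℕ) : ZMod (2*n)) = ((2*i' : ℕ) : ZMod (2*n)) := by
      linear_combination h2
    have := cast_inj_of_lt hn (by omega) (by omega) e; omega

lemma exist0 (hn : 2 ≤ n) (u : ZMod (2*n) × ZMod (2*n)) (vert : Bool) :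
    ∃ i : ℕ, i < n ∧ (cop n hn ((2*i : ℕ) : ZMod (2*n))).Adj u (pt u vert) := by
  haveI : NeZero (2*n) := ⟨by omega⟩
  haveI : NeZero (4*n) := ⟨by omega⟩
  haveI : Fact (1 < 4*n) := ⟨by omega⟩
  set t := (dg u).val with ht
  have htlt : t < 2*n := ZMod.val_lt _
  have hu1 : u.1.val < 2*n := ZMod.val_lt _
  have hdg : ((t : ℕ) : ZMod (2*n)) = dg u := ZMod.natCast_zmod_val _
  rcases Nat.mod_two_eq_zero_or_one t with hpar | hpar
  · -- even diagonal
    refine ⟨t/2, by omega, ?_⟩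
    have hd : ((2*(t/2) : ℕ) : ZMod (2*n)) = dg u := by
      rw [show 2*(t/2) = t by omega, hdg]
    rw [cop_adj]
    set j : ZMod (4*n) := ((2*u.1.val : ℕ) : ZMod (4*n)) with hj
    have hval : j.val = 2*u.1.val := ZMod.val_cast_of_lt (by omega)
    cases vert
    · -- horizontal : cycle edge
      refine ⟨Sum.inl j, Sum.inl (j+1), ?_, ?_, ?_⟩
      · rw [sunlet, SimpleGraph.fromRel_adj]
        refine ⟨?_, Or.inl rfl⟩
        intro hcon
        apply Sum.inl.inj at hcon
        exact one_ne_zero (α := ZMod (4*n)) (by linear_combination -hcon)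
      · rw [phi_inl, hval, stair_even _ (by omega), show 2*u.1.val/2 = u.1.val by omega,
          ZMod.natCast_zmod_val, hd]
        have e2 : u.1 + dg u = u.2 := by simp only [dg]; ring
        rw [e2]
      · rw [phi_inl_add_one hn, hval, stair_odd _ (by omega),
          show (2*u.1.val+1)/2 = u.1.val by omega, ZMod.natCast_zmod_val, hd]
        have e2 : u.1 + dg u = u.2 := by simp only [dg]; ring
        rw [e2]
        rfl
    · -- vertical : pendant edge
      refine ⟨Sum.inl j, Sum.inr j, ?_, ?_, ?_⟩
      · rw [sunlet, SimpleGraph.fromRel_adj]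
        exact ⟨by simp, Or.inl rfl⟩
      · rw [phi_inl, hval, stair_even _ (by omega), show 2*u.1.val/2 = u.1.val by omega,
          ZMod.natCast_zmod_val, hd]
        have e2 : u.1 + dg u = u.2 := by simp only [dg]; ring
        rw [e2]
      · rw [phi_inr, hval, leaf_even _ (by omega), show 2*u.1.val/2 = u.1.val by omega,
          ZMod.natCast_zmod_val, hd]
        have e2 : u.1 + dg u = u.2 := by simp only [dg]; ring
        rw [e2]
        rfl
  · -- odd diagonal
    refine ⟨(t+1)/2 % n, Nat.mod_lt _ (by omega), ?_⟩
    set i := (t+1)/2 % n with hi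
    have hd : ((2*i : ℕ) : ZMod (2*n)) = dg u + 1 := by
      by_cases hc : t = 2*n - 1
      · have hi0 : i = 0 := by
          rw [hi, hc, show (2*n-1+1)/2 = n by omega, Nat.mod_self]
        rw [hi0]
        have h2 : dg u + 1 = ((t+1 : ℕ) : ZMod (2*n)) := by rw [← hdg]; push_cast; ring
        rw [h2, hc, show 2*n-1+1 = 2*n by omega, ZMod.natCast_self]
        simp
      · have hieq : i = (t+1)/2 := by rw [hi, Nat.mod_eq_of_lt (by omega)]
        rw [hieq, show 2*((t+1)/2) = t+1 by omega, ← hdg]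
        push_cast
        ring
    set K := (u.1.val + 2*n - 1) % (2*n) with hK
    have hKlt : K < 2*n := Nat.mod_lt _ (by omega)
    have hKcast : ((K : ℕ) : ZMod (2*n)) = u.1 - 1 := by
      rw [hK, ZMod.natCast_mod, show u.1.val + 2*n - 1 = u.1.val + (2*n - 1) by omega,
        Nat.cast_add, ZMod.natCast_zmod_val, Nat.cast_sub (by omega : 1 ≤ 2*n)]
      rw [ZMod.natCast_self]
      push_cast
      ring
    set m := 2*K + 1 with hm
    set j : ZMod (4*n) := ((m : ℕ) : ZMod (4*n)) with hj
    have hval : j.val = m := ZMod.val_cast_of_lt (by omega)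
    rw [cop_adj]
    have hstair : phi n ((2*i : ℕ) : ZMod (2*n)) (Sum.inl j) = u := by
      rw [phi_inl, hval, stair_odd _ (by omega), show m/2 = K by omega, hKcast, hd]
      have e1 : u.1 - 1 + 1 = u.1 := by ring
      have e2 : u.1 - 1 + (dg u + 1) = u.2 := by simp only [dg]; ring
      rw [e1, e2]
    cases vert
    · -- horizontal : pendant edge
      refine ⟨Sum.inl j, Sum.inr j, ?_, hstair, ?_⟩
      · rw [sunlet, SimpleGraph.fromRel_adj]
        exact ⟨by simp, Or.inl rfl⟩
      · rw [phi_inr, hval, leaf_odd _ (by omega), show m/2 = K by omega, hKcast, hd]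
        refine Prod.ext ?_ ?_
        · show u.1 - 1 + 2 = (pt u false).1
          show u.1 - 1 + 2 = u.1 + 1
          ring
        · show u.1 - 1 + (dg u + 1) = (pt u false).2
          show u.1 - 1 + (dg u + 1) = u.2
          simp only [dg]; ring
    · -- vertical : cycle edge
      refine ⟨Sum.inl j, Sum.inl (j+1), ?_, hstair, ?_⟩
      · rw [sunlet, SimpleGraph.fromRel_adj]
        refine ⟨?_, Or.inl rfl⟩
        intro hcon
        apply Sum.inl.inj at hcon
        exact one_ne_zero (α := ZMod (4*n)) (by linear_combination -hcon)
      · rw [phi_inl_add_one hn, hval, stair_even _ (by omega : (m+1) % 2 = 0),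
          show (m+1)/2 = K + 1 by omega, hd]
        refine Prod.ext ?_ ?_
        · show ((K+1 : ℕ) : ZMod (2*n)) = (pt u true).1
          rw [Nat.cast_add, hKcast]
          show u.1 - 1 + ((1:ℕ) : ZMod (2*n)) = u.1
          push_cast; ring
        · show ((K+1 : ℕ) : ZMod (2*n)) + (dg u + 1) = (pt u true).2
          rw [Nat.cast_add, hKcast]
          show u.1 - 1 + ((1:ℕ) : ZMod (2*n)) + (dg u + 1) = u.2 + 1
          simp only [dg]; push_cast; ring

lemma exist (hn : 2 ≤ n) {u v : ZMod (2*n) × ZMod (2*n)} (h : (torGrid (2*n)).Adj u v) :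
    ∃ i : ℕ, i < n ∧ (cop n hn ((2*i : ℕ) : ZMod (2*n))).Adj u v := by
  rw [torGrid, SimpleGraph.fromRel_adj] at h
  obtain ⟨hne, (⟨ha, hb⟩ | ⟨ha, hb⟩) | (⟨ha, hb⟩ | ⟨ha, hb⟩)⟩ := h
  · have hv : v = pt u true := by
      show v = (u.1, u.2 + 1)
      rw [ha, ← hb]
    rw [hv]
    exact exist0 hn u true
  · have hv : v = pt u false := by
      show v = (u.1 + 1, u.2)
      rw [ha, ← hb]
    rw [hv]
    exact exist0 hn u false
  · have hv : u = pt v true := by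
      show u = (v.1, v.2 + 1)
      rw [ha, ← hb]
    rw [hv]
    obtain ⟨i, hi, hadj⟩ := exist0 hn v true
    exact ⟨i, hi, hadj.symm⟩
  · have hv : u = pt v false := by
      show u = (v.1 + 1, v.2)
      rw [ha, ← hb]
    rw [hv]
    obtain ⟨i, hi, hadj⟩ := exist0 hn v false
    exact ⟨i, hi, hadj.symm⟩

noncomputable def copIso (hn : 2 ≤ n) (d : ZMod (2*n)) :
    sunlet (4*n) ≃g (cop n hn d).coe where
  toEquiv := (Equiv.ofInjective _ (phi_inj hn d)).trans (Equiv.setCongr (cop_verts hn d).symm)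
  map_rel_iff' := by
    intro a b
    show (cop n hn d).coe.Adj _ _ ↔ _
    rw [SimpleGraph.Subgraph.coe_adj]
    show (cop n hn d).Adj (phi n d a) (phi n d b) ↔ _
    rw [cop_adj]
    constructor
    · rintro ⟨a', b', hab, ha, hb⟩
      rwa [phi_inj hn d ha, phi_inj hn d hb] at hab
    · intro hab
      exact ⟨a, b, hab, rfl, rfl⟩

end Staircase

/-- For `n ≥ 2`, the edge set of `C_{2n} □ C_{2n}` is partitioned by `n` subgraphs,
each isomorphic to the sunlet `S¹_{4n}`. -/
theorem sunlet_factorization_staircase (n : ℕ) (hn : 2 ≤ n) :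
    ∃ F : Fin n → (torGrid (2 * n)).Subgraph,
      (∀ i, Nonempty ((F i).coe ≃g sunlet (4 * n))) ∧
      (∀ e ∈ (torGrid (2 * n)).edgeSet, ∃! i, e ∈ (F i).edgeSet) := by
  refine ⟨fun i => Staircase.cop n hn ((2*(i : ℕ) : ℕ) : ZMod (2*n)),
    fun i => ⟨(Staircase.copIso hn _).symm⟩, ?_⟩
  intro e he
  induction e using Sym2.ind with
  | _ u v =>
    rw [SimpleGraph.mem_edgeSet] at he
    obtain ⟨i, hi, hadj⟩ := Staircase.exist hn he
    refine ⟨⟨i, hi⟩, hadj, ?_⟩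
    rintro ⟨i', hi'⟩ hmem
    exact Fin.ext (Staircase.uniq hn hi' hi hmem hadj)
end

section
/- For every integer n ≥ 2, the edge set of the toroidal grid C_{2n} □ C_{2n} can be partitioned into n² pairwise edge-disjoint subgraphs, each of which is isomorphic to the sunlet graph S¹_4. -/
namespace SunletFact

instance sunletDec : DecidableRel (sunlet 4).Adj := fun u w => by
  cases u with
  | inl a => cases w with
    | inl b => exact decidable_of_iff (Sum.inl a ≠ (Sum.inl b : ZMod 4 ⊕ ZMod 4) ∧ (b = a + 1 ∨ a = b + 1)) Iff.rfl
    | inr b => exact decidable_of_iff (Sum.inl a ≠ (Sum.inr b : ZMod 4 ⊕ ZMod 4) ∧ (a = b ∨ False)) Iff.rfl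
  | inr a => cases w with
    | inl b => exact decidable_of_iff ((Sum.inr a : ZMod 4 ⊕ ZMod 4) ≠ Sum.inl b ∧ (False ∨ b = a)) Iff.rfl
    | inr b => exact decidable_of_iff ((Sum.inr a : ZMod 4 ⊕ ZMod 4) ≠ Sum.inr b ∧ (False ∨ False)) Iff.rfl

def off (n : ℕ) : ZMod 4 ⊕ ZMod 4 → ℕ × ℕ
  | .inl ⟨0,_⟩ => (0, 0)
  | .inl ⟨1,_⟩ => (1, 0)
  | .inl ⟨2,_⟩ => (1, 1)
  | .inl ⟨_+3,_⟩ => (0, 1)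
  | .inr ⟨0,_⟩ => (0, 2*n-1)
  | .inr ⟨1,_⟩ => (2, 0)
  | .inr ⟨2,_⟩ => (1, 2)
  | .inr ⟨_+3,_⟩ => (2*n-1, 1)

def phi (n : ℕ) (q : Fin n × Fin n) (x : ZMod 4 ⊕ ZMod 4) : ZMod (2*n) × ZMod (2*n) :=
  (((2 * q.1.val + (off n x).1 : ℕ) : ZMod (2*n)), ((2 * q.2.val + (off n x).2 : ℕ) : ZMod (2*n)))

lemma castEq_of {n : ℕ} (hn : 2 ≤ n) {u v : ℕ} (h : (u : ZMod (2*n)) = (v : ZMod (2*n)))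
    (hu : u < 4*n) (hv : v < 4*n) : u = v ∨ u + 2*n = v ∨ v + 2*n = u := by
  rw [ZMod.natCast_eq_natCast_iff'] at h
  rcases lt_or_ge u (2*n) with h1 | h1 <;> rcases lt_or_ge v (2*n) with h2 | h2
  · rw [Nat.mod_eq_of_lt h1, Nat.mod_eq_of_lt h2] at h; omega
  · rw [Nat.mod_eq_of_lt h1, Nat.mod_eq_sub_mod h2, Nat.mod_eq_of_lt (by omega)] at h; omega
  · rw [Nat.mod_eq_sub_mod h1, Nat.mod_eq_of_lt (by omega), Nat.mod_eq_of_lt h2] at h; omega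
  · rw [Nat.mod_eq_sub_mod h1, Nat.mod_eq_of_lt (by omega), Nat.mod_eq_sub_mod h2,
      Nat.mod_eq_of_lt (by omega)] at h; omega

lemma castEq_mk {n : ℕ} {u v : ℕ} (h : u = v ∨ u + 2*n = v ∨ v + 2*n = u) :
    (u : ZMod (2*n)) = (v : ZMod (2*n)) := by
  have z : ((2*n : ℕ) : ZMod (2*n)) = 0 := ZMod.natCast_self _
  rcases h with rfl | h | h
  · rfl
  · rw [← h]; push_cast [z]; ring
  · rw [← h]; push_cast [z]; ring

lemma one_ne_zero' {n : ℕ} (hn : 2 ≤ n) : (1 : ZMod (2*n)) ≠ 0 := by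
  have h : ((1:ℕ) : ZMod (2*n)) ≠ ((0:ℕ) : ZMod (2*n)) := by
    intro h; have := castEq_of hn h (by omega) (by omega); omega
  simpa using h

lemma adjH {n : ℕ} (hn : 2 ≤ n) (u : ZMod (2*n) × ZMod (2*n)) :
    (torGrid (2*n)).Adj u (u.1 + 1, u.2) := by
  refine ⟨?_, Or.inl (Or.inr ⟨rfl, rfl⟩)⟩
  intro h
  have h1 : u.1 = u.1 + 1 := congrArg Prod.fst h
  exact one_ne_zero' hn (left_eq_add.mp h1)

lemma adjV {n : ℕ} (hn : 2 ≤ n) (u : ZMod (2*n) × ZMod (2*n)) :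
    (torGrid (2*n)).Adj u (u.1, u.2 + 1) := by
  refine ⟨?_, Or.inl (Or.inl ⟨rfl, rfl⟩)⟩
  intro h
  have h1 : u.2 = u.2 + 1 := congrArg Prod.snd h
  exact one_ne_zero' hn (left_eq_add.mp h1)

lemma adjH_nat {n : ℕ} (hn : 2 ≤ n) (x1 x2 y : ℕ)
    (h : x1 + 1 = x2 ∨ x1 + 1 + 2*n = x2 ∨ x2 + 2*n = x1 + 1) :
    (torGrid (2*n)).Adj ((x1 : ZMod (2*n)), (y : ZMod (2*n))) ((x2 : ZMod (2*n)), (y : ZMod (2*n))) := by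
  have e : ((x2:ℕ) : ZMod (2*n)) = (x1 : ZMod (2*n)) + 1 := by
    have h3 : ((x1+1 : ℕ) : ZMod (2*n)) = ((x2:ℕ) : ZMod (2*n)) := castEq_mk h
    push_cast at h3; rw [← h3]
  have h4 := adjH hn ((x1 : ZMod (2*n)), (y : ZMod (2*n)))
  rw [← e] at h4
  exact h4

lemma adjV_nat {n : ℕ} (hn : 2 ≤ n) (x y1 y2 : ℕ)
    (h : y1 + 1 = y2 ∨ y1 + 1 + 2*n = y2 ∨ y2 + 2*n = y1 + 1) :
    (torGrid (2*n)).Adj ((x : ZMod (2*n)), (y1 : ZMod (2*n))) ((x : ZMod (2*n)), (y2 : ZMod (2*n))) := by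
  have e : ((y2:ℕ) : ZMod (2*n)) = (y1 : ZMod (2*n)) + 1 := by
    have h3 : ((y1+1 : ℕ) : ZMod (2*n)) = ((y2:ℕ) : ZMod (2*n)) := castEq_mk h
    push_cast at h3; rw [← h3]
  have h4 := adjV hn ((x : ZMod (2*n)), (y1 : ZMod (2*n)))
  rw [← e] at h4
  exact h4

def blockSub (n : ℕ) (hn : 2 ≤ n) (q : Fin n × Fin n) : (torGrid (2*n)).Subgraph where
  verts := Set.range (phi n q)
  Adj u v := ∃ x y, (sunlet 4).Adj x y ∧ u = phi n q x ∧ v = phi n q y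
  adj_sub := by
    rintro u v ⟨x, y, h, rfl, rfl⟩
    obtain ⟨a, b⟩ := q
    have ha := a.isLt
    have hb := b.isLt
    fin_cases x <;> fin_cases y <;>
      first
      | exact absurd h (by decide)
      | (simp only [phi, off]
         first
         | (refine adjH_nat hn _ _ _ ?_ <;> omega)
         | (refine adjV_nat hn _ _ _ ?_ <;> omega)
         | (refine (adjH_nat hn _ _ _ ?_).symm <;> omega)
         | (refine (adjV_nat hn _ _ _ ?_).symm <;> omega))
  edge_vert := by rintro u v ⟨x, y, h, rfl, rfl⟩; exact ⟨x, rfl⟩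
  symm := ⟨by rintro u v ⟨x, y, h, rfl, rfl⟩; exact ⟨y, x, h.symm, rfl, rfl⟩⟩

lemma phi_inj {n : ℕ} (hn : 2 ≤ n) (q : Fin n × Fin n) : Function.Injective (phi n q) := by
  obtain ⟨a, b⟩ := q
  have ha := a.isLt
  have hb := b.isLt
  intro x y h
  have h1 := congrArg Prod.fst h
  have h2 := congrArg Prod.snd h
  fin_cases x <;> fin_cases y <;>
    first
    | rfl
    | (exfalso
       simp only [phi, off] at h1 h2
       first
       | (have c1 := castEq_of hn h1 (by omega) (by omega)
          have c2 := castEq_of hn h2 (by omega) (by omega)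
          omega)
       | (have c1 := castEq_of hn h1 (by omega) (by omega)
          omega)
       | (have c2 := castEq_of hn h2 (by omega) (by omega)
          omega))

lemma blockIso {n : ℕ} (hn : 2 ≤ n) (q : Fin n × Fin n) :
    Nonempty ((blockSub n hn q).coe ≃g sunlet 4) := by
  have hinj := phi_inj hn q
  refine ⟨SimpleGraph.Iso.symm ⟨Equiv.ofInjective (phi n q) hinj, ?_⟩⟩
  intro x y
  constructor
  · rintro ⟨x', y', hadj, hx, hy⟩
    have hx' : phi n q x = phi n q x' := hx
    have hy' : phi n q y = phi n q y' := hy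
    rw [hinj hx', hinj hy']
    exact hadj
  · intro hadj
    exact ⟨x, y, hadj, rfl, rfl⟩

lemma val_cast' {m : ℕ} [NeZero m] (a : ZMod m) : ((a.val : ℕ) : ZMod m) = a := by
  rw [ZMod.natCast_val, ZMod.cast_id]

set_option maxHeartbeats 2000000 in
lemma cover {n : ℕ} (hn : 2 ≤ n) :
    ∀ e ∈ (torGrid (2*n)).edgeSet, ∃! q : Fin n × Fin n, e ∈ (blockSub n hn q).edgeSet := by
  haveI : NeZero (2*n) := ⟨by omega⟩
  have H : ∀ u v : ZMod (2*n) × ZMod (2*n),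
      ((u.1 = v.1 ∧ v.2 = u.2 + 1) ∨ (u.2 = v.2 ∧ v.1 = u.1 + 1)) →
      ∃! q : Fin n × Fin n, (blockSub n hn q).Adj u v := by
    rintro ⟨u1, u2⟩ ⟨v1, v2⟩ h
    obtain ⟨m1, hm1, rfl⟩ : ∃ m, m < 2*n ∧ (m : ZMod (2*n)) = u1 :=
      ⟨u1.val, ZMod.val_lt u1, val_cast' u1⟩
    obtain ⟨m2, hm2, rfl⟩ : ∃ m, m < 2*n ∧ (m : ZMod (2*n)) = u2 :=
      ⟨u2.val, ZMod.val_lt u2, val_cast' u2⟩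
    have add1 : ∀ m : ℕ, (m : ZMod (2*n)) + 1 = ((m+1 : ℕ) : ZMod (2*n)) := by
      intro m; push_cast; ring
    rcases h with ⟨h1, h2⟩ | ⟨h1, h2⟩
    · -- vertical edge
      subst h1
      rw [add1] at h2
      subst h2
      by_cases p1 : m1 % 2 = 0 <;> by_cases p2 : m2 % 2 = 0
      · -- even even : q = (m1/2, m2/2), witness inl 0 -- inl 3
        refine ⟨(⟨m1/2, by omega⟩, ⟨m2/2, by omega⟩),
          ⟨Sum.inl 0, Sum.inl 3, by decide, ?_, ?_⟩, ?_⟩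
        · simp only [phi, off, Prod.mk.injEq]
          exact ⟨castEq_mk (by omega), castEq_mk (by omega)⟩
        · simp only [phi, off, Prod.mk.injEq]
          exact ⟨castEq_mk (by omega), castEq_mk (by omega)⟩
        · rintro ⟨a', b'⟩ ⟨x, y, hxy, hu', hv'⟩
          have ha' := a'.isLt; have hb' := b'.isLt
          fin_cases x <;> fin_cases y <;>
            first
            | exact absurd hxy (by decide)
            | (simp only [phi, off, Prod.mk.injEq] at hu' hv'
               have c1 := castEq_of hn hu'.1 (by omega) (by omega)
               have c2 := castEq_of hn hu'.2 (by omega) (by omega)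
               have c3 := castEq_of hn hv'.1 (by omega) (by omega)
               have c4 := castEq_of hn hv'.2 (by omega) (by omega)
               rw [Prod.mk.injEq]
               exact ⟨Fin.eq_mk_iff_val_eq.mpr (by omega), Fin.eq_mk_iff_val_eq.mpr (by omega)⟩)
      · -- even odd : q = (m1/2, wrap (m2/2+1)), witness inr 0 -- inl 0
        by_cases hw : m2/2 + 1 < n
        case pos =>
          refine ⟨(⟨m1/2, by omega⟩, ⟨m2/2 + 1, by omega⟩),
            ⟨Sum.inr 0, Sum.inl 0, by decide, ?_, ?_⟩, ?_⟩
          · simp only [phi, off, Prod.mk.injEq]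
            exact ⟨castEq_mk (by omega), castEq_mk (by omega)⟩
          · simp only [phi, off, Prod.mk.injEq]
            exact ⟨castEq_mk (by omega), castEq_mk (by omega)⟩
          · rintro ⟨a', b'⟩ ⟨x, y, hxy, hu', hv'⟩
            have ha' := a'.isLt; have hb' := b'.isLt
            fin_cases x <;> fin_cases y <;>
              first
              | exact absurd hxy (by decide)
              | (simp only [phi, off, Prod.mk.injEq] at hu' hv'
                 have c1 := castEq_of hn hu'.1 (by omega) (by omega)
                 have c2 := castEq_of hn hu'.2 (by omega) (by omega)
                 have c3 := castEq_of hn hv'.1 (by omega) (by omega)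
                 have c4 := castEq_of hn hv'.2 (by omega) (by omega)
                 rw [Prod.mk.injEq]
                 exact ⟨Fin.eq_mk_iff_val_eq.mpr (by omega), Fin.eq_mk_iff_val_eq.mpr (by omega)⟩)
        case neg =>
          refine ⟨(⟨m1/2, by omega⟩, ⟨0, by omega⟩),
            ⟨Sum.inr 0, Sum.inl 0, by decide, ?_, ?_⟩, ?_⟩
          · simp only [phi, off, Prod.mk.injEq]
            exact ⟨castEq_mk (by omega), castEq_mk (by omega)⟩
          · simp only [phi, off, Prod.mk.injEq]
            exact ⟨castEq_mk (by omega), castEq_mk (by omega)⟩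
          · rintro ⟨a', b'⟩ ⟨x, y, hxy, hu', hv'⟩
            have ha' := a'.isLt; have hb' := b'.isLt
            fin_cases x <;> fin_cases y <;>
              first
              | exact absurd hxy (by decide)
              | (simp only [phi, off, Prod.mk.injEq] at hu' hv'
                 have c1 := castEq_of hn hu'.1 (by omega) (by omega)
                 have c2 := castEq_of hn hu'.2 (by omega) (by omega)
                 have c3 := castEq_of hn hv'.1 (by omega) (by omega)
                 have c4 := castEq_of hn hv'.2 (by omega) (by omega)
                 rw [Prod.mk.injEq]
                 exact ⟨Fin.eq_mk_iff_val_eq.mpr (by omega), Fin.eq_mk_iff_val_eq.mpr (by omega)⟩)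
      · -- odd even : q = (m1/2, m2/2), witness inl 1 -- inl 2
        refine ⟨(⟨m1/2, by omega⟩, ⟨m2/2, by omega⟩),
          ⟨Sum.inl 1, Sum.inl 2, by decide, ?_, ?_⟩, ?_⟩
        · simp only [phi, off, Prod.mk.injEq]
          exact ⟨castEq_mk (by omega), castEq_mk (by omega)⟩
        · simp only [phi, off, Prod.mk.injEq]
          exact ⟨castEq_mk (by omega), castEq_mk (by omega)⟩
        · rintro ⟨a', b'⟩ ⟨x, y, hxy, hu', hv'⟩
          have ha' := a'.isLt; have hb' := b'.isLt
          fin_cases x <;> fin_cases y <;>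
            first
            | exact absurd hxy (by decide)
            | (simp only [phi, off, Prod.mk.injEq] at hu' hv'
               have c1 := castEq_of hn hu'.1 (by omega) (by omega)
               have c2 := castEq_of hn hu'.2 (by omega) (by omega)
               have c3 := castEq_of hn hv'.1 (by omega) (by omega)
               have c4 := castEq_of hn hv'.2 (by omega) (by omega)
               rw [Prod.mk.injEq]
               exact ⟨Fin.eq_mk_iff_val_eq.mpr (by omega), Fin.eq_mk_iff_val_eq.mpr (by omega)⟩)
      · -- odd odd : q = (m1/2, m2/2), witness inl 2 -- inr 2
        refine ⟨(⟨m1/2, by omega⟩, ⟨m2/2, by omega⟩),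
          ⟨Sum.inl 2, Sum.inr 2, by decide, ?_, ?_⟩, ?_⟩
        · simp only [phi, off, Prod.mk.injEq]
          exact ⟨castEq_mk (by omega), castEq_mk (by omega)⟩
        · simp only [phi, off, Prod.mk.injEq]
          exact ⟨castEq_mk (by omega), castEq_mk (by omega)⟩
        · rintro ⟨a', b'⟩ ⟨x, y, hxy, hu', hv'⟩
          have ha' := a'.isLt; have hb' := b'.isLt
          fin_cases x <;> fin_cases y <;>
            first
            | exact absurd hxy (by decide)
            | (simp only [phi, off, Prod.mk.injEq] at hu' hv'
               have c1 := castEq_of hn hu'.1 (by omega) (by omega)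
               have c2 := castEq_of hn hu'.2 (by omega) (by omega)
               have c3 := castEq_of hn hv'.1 (by omega) (by omega)
               have c4 := castEq_of hn hv'.2 (by omega) (by omega)
               rw [Prod.mk.injEq]
               exact ⟨Fin.eq_mk_iff_val_eq.mpr (by omega), Fin.eq_mk_iff_val_eq.mpr (by omega)⟩)
    · -- horizontal edge
      subst h1
      rw [add1] at h2
      subst h2
      by_cases p1 : m1 % 2 = 0 <;> by_cases p2 : m2 % 2 = 0
      · -- even even : witness inl 0 -- inl 1
        refine ⟨(⟨m1/2, by omega⟩, ⟨m2/2, by omega⟩),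
          ⟨Sum.inl 0, Sum.inl 1, by decide, ?_, ?_⟩, ?_⟩
        · simp only [phi, off, Prod.mk.injEq]
          exact ⟨castEq_mk (by omega), castEq_mk (by omega)⟩
        · simp only [phi, off, Prod.mk.injEq]
          exact ⟨castEq_mk (by omega), castEq_mk (by omega)⟩
        · rintro ⟨a', b'⟩ ⟨x, y, hxy, hu', hv'⟩
          have ha' := a'.isLt; have hb' := b'.isLt
          fin_cases x <;> fin_cases y <;>
            first
            | exact absurd hxy (by decide)
            | (simp only [phi, off, Prod.mk.injEq] at hu' hv'
               have c1 := castEq_of hn hu'.1 (by omega) (by omega)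
               have c2 := castEq_of hn hu'.2 (by omega) (by omega)
               have c3 := castEq_of hn hv'.1 (by omega) (by omega)
               have c4 := castEq_of hn hv'.2 (by omega) (by omega)
               rw [Prod.mk.injEq]
               exact ⟨Fin.eq_mk_iff_val_eq.mpr (by omega), Fin.eq_mk_iff_val_eq.mpr (by omega)⟩)
      · -- even odd : witness inl 3 -- inl 2
        refine ⟨(⟨m1/2, by omega⟩, ⟨m2/2, by omega⟩),
          ⟨Sum.inl 3, Sum.inl 2, by decide, ?_, ?_⟩, ?_⟩
        · simp only [phi, off, Prod.mk.injEq]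
          exact ⟨castEq_mk (by omega), castEq_mk (by omega)⟩
        · simp only [phi, off, Prod.mk.injEq]
          exact ⟨castEq_mk (by omega), castEq_mk (by omega)⟩
        · rintro ⟨a', b'⟩ ⟨x, y, hxy, hu', hv'⟩
          have ha' := a'.isLt; have hb' := b'.isLt
          fin_cases x <;> fin_cases y <;>
            first
            | exact absurd hxy (by decide)
            | (simp only [phi, off, Prod.mk.injEq] at hu' hv'
               have c1 := castEq_of hn hu'.1 (by omega) (by omega)
               have c2 := castEq_of hn hu'.2 (by omega) (by omega)
               have c3 := castEq_of hn hv'.1 (by omega) (by omega)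
               have c4 := castEq_of hn hv'.2 (by omega) (by omega)
               rw [Prod.mk.injEq]
               exact ⟨Fin.eq_mk_iff_val_eq.mpr (by omega), Fin.eq_mk_iff_val_eq.mpr (by omega)⟩)
      · -- odd even : witness inl 1 -- inr 1
        refine ⟨(⟨m1/2, by omega⟩, ⟨m2/2, by omega⟩),
          ⟨Sum.inl 1, Sum.inr 1, by decide, ?_, ?_⟩, ?_⟩
        · simp only [phi, off, Prod.mk.injEq]
          exact ⟨castEq_mk (by omega), castEq_mk (by omega)⟩
        · simp only [phi, off, Prod.mk.injEq]
          exact ⟨castEq_mk (by omega), castEq_mk (by omega)⟩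
        · rintro ⟨a', b'⟩ ⟨x, y, hxy, hu', hv'⟩
          have ha' := a'.isLt; have hb' := b'.isLt
          fin_cases x <;> fin_cases y <;>
            first
            | exact absurd hxy (by decide)
            | (simp only [phi, off, Prod.mk.injEq] at hu' hv'
               have c1 := castEq_of hn hu'.1 (by omega) (by omega)
               have c2 := castEq_of hn hu'.2 (by omega) (by omega)
               have c3 := castEq_of hn hv'.1 (by omega) (by omega)
               have c4 := castEq_of hn hv'.2 (by omega) (by omega)
               rw [Prod.mk.injEq]
               exact ⟨Fin.eq_mk_iff_val_eq.mpr (by omega), Fin.eq_mk_iff_val_eq.mpr (by omega)⟩)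
      · -- odd odd : q = (wrap (m1/2+1), m2/2), witness inr 3 -- inl 3
        by_cases hw : m1/2 + 1 < n
        case pos =>
          refine ⟨(⟨m1/2 + 1, by omega⟩, ⟨m2/2, by omega⟩),
            ⟨Sum.inr 3, Sum.inl 3, by decide, ?_, ?_⟩, ?_⟩
          · simp only [phi, off, Prod.mk.injEq]
            exact ⟨castEq_mk (by omega), castEq_mk (by omega)⟩
          · simp only [phi, off, Prod.mk.injEq]
            exact ⟨castEq_mk (by omega), castEq_mk (by omega)⟩
          · rintro ⟨a', b'⟩ ⟨x, y, hxy, hu', hv'⟩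
            have ha' := a'.isLt; have hb' := b'.isLt
            fin_cases x <;> fin_cases y <;>
              first
              | exact absurd hxy (by decide)
              | (simp only [phi, off, Prod.mk.injEq] at hu' hv'
                 have c1 := castEq_of hn hu'.1 (by omega) (by omega)
                 have c2 := castEq_of hn hu'.2 (by omega) (by omega)
                 have c3 := castEq_of hn hv'.1 (by omega) (by omega)
                 have c4 := castEq_of hn hv'.2 (by omega) (by omega)
                 rw [Prod.mk.injEq]
                 exact ⟨Fin.eq_mk_iff_val_eq.mpr (by omega), Fin.eq_mk_iff_val_eq.mpr (by omega)⟩)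
        case neg =>
          refine ⟨(⟨0, by omega⟩, ⟨m2/2, by omega⟩),
            ⟨Sum.inr 3, Sum.inl 3, by decide, ?_, ?_⟩, ?_⟩
          · simp only [phi, off, Prod.mk.injEq]
            exact ⟨castEq_mk (by omega), castEq_mk (by omega)⟩
          · simp only [phi, off, Prod.mk.injEq]
            exact ⟨castEq_mk (by omega), castEq_mk (by omega)⟩
          · rintro ⟨a', b'⟩ ⟨x, y, hxy, hu', hv'⟩
            have ha' := a'.isLt; have hb' := b'.isLt
            fin_cases x <;> fin_cases y <;>
              first
              | exact absurd hxy (by decide)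
              | (simp only [phi, off, Prod.mk.injEq] at hu' hv'
                 have c1 := castEq_of hn hu'.1 (by omega) (by omega)
                 have c2 := castEq_of hn hu'.2 (by omega) (by omega)
                 have c3 := castEq_of hn hv'.1 (by omega) (by omega)
                 have c4 := castEq_of hn hv'.2 (by omega) (by omega)
                 rw [Prod.mk.injEq]
                 exact ⟨Fin.eq_mk_iff_val_eq.mpr (by omega), Fin.eq_mk_iff_val_eq.mpr (by omega)⟩)
  intro e
  induction e using Sym2.ind with
  | _ u v =>
    intro he
    obtain ⟨hne, hrel⟩ := he
    rcases hrel with h | h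
    · simp only [SimpleGraph.Subgraph.mem_edgeSet]
      exact H u v h
    · rw [Sym2.eq_swap]
      simp only [SimpleGraph.Subgraph.mem_edgeSet]
      exact H v u h

end SunletFact

/-- For `n ≥ 2`, the edge set of `C_{2n} □ C_{2n}` is partitioned by `n²` subgraphs,
each isomorphic to the sunlet `S¹_4`. -/
theorem sunlet_factorization_squares (n : ℕ) (hn : 2 ≤ n) :
    ∃ F : Fin (n ^ 2) → (torGrid (2 * n)).Subgraph,
      (∀ i, Nonempty ((F i).coe ≃g sunlet 4)) ∧
      (∀ e ∈ (torGrid (2 * n)).edgeSet, ∃! i, e ∈ (F i).edgeSet) := by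
  let E : Fin (n^2) ≃ Fin n × Fin n := (finCongr (by ring)).trans finProdFinEquiv.symm
  refine ⟨fun i => SunletFact.blockSub n hn (E i),
    fun i => SunletFact.blockIso hn (E i), fun e he => ?_⟩
  obtain ⟨q, hq, huniq⟩ := SunletFact.cover hn e he
  refine ⟨E.symm q, ?_, fun j hj => ?_⟩
  · show e ∈ (SunletFact.blockSub n hn (E (E.symm q))).edgeSet
    rw [Equiv.apply_symm_apply]
    exact hq
  · have h := huniq (E j) hj
    exact (Equiv.eq_symm_apply E).mpr h
end

section
/- For every integer n ≥ 2, there exist n pairwise vertex-disjoint cycles, each of length 4n, in the toroidal grid C_{2n} □ C_{2n}, whose vertex sets together cover all (2n)² vertices; concretely, for each t ∈ {0,…,n−1} the t-th cycle passes through the vertices (j + 2t, j) and (j + 2t + 1, j) for j ∈ ZMod 2n. -/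
namespace StairAux

def stf (n t k : ℕ) : ZMod (2*n) × ZMod (2*n) :=
  (((2*t + (k+1)/2 : ℕ) : ZMod (2*n)), ((k/2 : ℕ) : ZMod (2*n)))

-- (aux lemmas pasted below from t2)
lemma cast_nat_inj {n a b : ℕ} (ha : a < n) (hb : b < n)
    (h : ((a : ℕ) : ZMod n) = (b : ℕ)) : a = b := by
  have := (ZMod.natCast_eq_natCast_iff a b n).1 h
  unfold Nat.ModEq at this
  rwa [Nat.mod_eq_of_lt ha, Nat.mod_eq_of_lt hb] at this

lemma stf_adj (n : ℕ) (hn : 2 ≤ n) (t k : ℕ) :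
    (torGrid (2*n)).Adj (stf n t k) (stf n t (k+1)) := by
  haveI : Fact (1 < 2*n) := ⟨by omega⟩
  rw [torGrid, SimpleGraph.fromRel_adj]
  rcases Nat.even_or_odd k with ⟨m, hm⟩ | ⟨m, hm⟩
  · have h1 : (k+1)/2 = m := by omega
    have h2 : (k+1+1)/2 = m+1 := by omega
    have h3 : k/2 = m := by omega
    have h4 : (k+1)/2 = m := by omega
    refine ⟨fun hcon => ?_, Or.inl (Or.inr ⟨?_, ?_⟩)⟩
    · have h := congrArg Prod.fst hcon
      simp only [stf, h1, h2] at h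
      push_cast at h
      exact one_ne_zero (α := ZMod (2*n)) (by linear_combination -h)
    · show ((k/2 : ℕ) : ZMod (2*n)) = (((k+1)/2 : ℕ) : ZMod (2*n))
      rw [h1, h3]
    · show ((2*t + (k+1+1)/2 : ℕ) : ZMod (2*n)) = ((2*t + (k+1)/2 : ℕ) : ZMod (2*n)) + 1
      rw [h1, h2]; push_cast; ring
  · have h1 : (k+1)/2 = m+1 := by omega
    have h2 : (k+1+1)/2 = m+1 := by omega
    have h3 : k/2 = m := by omega
    have h4 : (k+1)/2 = m+1 := by omega
    refine ⟨fun hcon => ?_, Or.inl (Or.inl ⟨?_, ?_⟩)⟩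
    · have h := congrArg Prod.snd hcon
      simp only [stf, h3, show (k+1)/2 = m+1 from h1] at h
      push_cast at h
      exact one_ne_zero (α := ZMod (2*n)) (by linear_combination -h)
    · show ((2*t + (k+1)/2 : ℕ) : ZMod (2*n)) = ((2*t + (k+1+1)/2 : ℕ) : ZMod (2*n))
      rw [h1, h2]
    · show (((k+1)/2 : ℕ) : ZMod (2*n)) = ((k/2 : ℕ) : ZMod (2*n)) + 1
      rw [h1, h3]; push_cast; ring

lemma stf_inj (n : ℕ) (hn : 2 ≤ n) {t t' k l : ℕ} (ht : t < n) (ht' : t' < n)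
    (hk : k < 4*n) (hl : l < 4*n) (h : stf n t k = stf n t' l) : t = t' ∧ k = l := by
  have h2 := congrArg Prod.snd h
  have h1 := congrArg Prod.fst h
  simp only [stf] at h1 h2
  have hm : k/2 = l/2 := cast_nat_inj (by omega) (by omega) h2
  have e1 : (k+1)/2 = k/2 + k%2 := by omega
  have e2 : (l+1)/2 = l/2 + l%2 := by omega
  rw [e1, e2, ← hm] at h1
  have hmod := (ZMod.natCast_eq_natCast_iff _ _ _).1 h1
  have hc : Nat.ModEq (2*n) (2*t + k%2) (2*t' + l%2) := by
    have step : Nat.ModEq (2*n) ((2*t + k%2) + k/2) ((2*t' + l%2) + k/2) := by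
      calc (2*t + k%2) + k/2 = 2*t + (k/2 + k%2) := by ring
        _ ≡ 2*t' + (k/2 + l%2) [MOD 2*n] := hmod
        _ = (2*t' + l%2) + k/2 := by ring
    exact step.add_right_cancel' _
  have b1 : (2*t + k%2) % (2*n) = 2*t + k%2 := Nat.mod_eq_of_lt (by omega)
  have b2 : (2*t' + l%2) % (2*n) = 2*t' + l%2 := Nat.mod_eq_of_lt (by omega)
  unfold Nat.ModEq at hc
  rw [b1, b2] at hc
  omega

lemma stf_period (n t : ℕ) (hn : 2 ≤ n) : stf n t (4*n) = stf n t 0 := by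
  simp only [stf]
  rw [show (4*n+1)/2 = 2*n + (0+1)/2 by omega, show (4*n)/2 = 2*n + 0/2 by omega]
  refine Prod.ext ?_ ?_ <;> simp [Nat.cast_add, ZMod.natCast_self, ← add_assoc]



/-- Combined injectivity allowing the endpoints `0` and `4n`. -/
lemma stf_eq_cases (n : ℕ) (hn : 2 ≤ n) {t t' k l : ℕ} (ht : t < n) (ht' : t' < n)
    (hk : k ≤ 4*n) (hl : l ≤ 4*n) (h : stf n t k = stf n t' l) :
    t = t' ∧ (k = l ∨ (k = 0 ∧ l = 4*n) ∨ (k = 4*n ∧ l = 0)) := by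
  rcases eq_or_lt_of_le hk with rfl | hk'
  · rw [stf_period n t hn] at h
    rcases eq_or_lt_of_le hl with rfl | hl'
    · rw [stf_period n t' hn] at h
      obtain ⟨h1, h2⟩ := stf_inj n hn ht ht' (by omega) (by omega) h
      exact ⟨h1, Or.inl rfl⟩
    · obtain ⟨h1, h2⟩ := stf_inj n hn ht ht' (by omega) hl' h
      exact ⟨h1, by omega⟩
  · rcases eq_or_lt_of_le hl with rfl | hl'
    · rw [stf_period n t' hn] at h
      obtain ⟨h1, h2⟩ := stf_inj n hn ht ht' hk' (by omega) h
      exact ⟨h1, by omega⟩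
    · obtain ⟨h1, h2⟩ := stf_inj n hn ht ht' hk' hl' h
      exact ⟨h1, Or.inl h2⟩

def mkWalk {V : Type*} (G : SimpleGraph V) (f : ℕ → V) (h : ∀ k, G.Adj (f k) (f (k+1))) :
    (m : ℕ) → G.Walk (f 0) (f m)
  | 0 => .nil
  | m+1 => (mkWalk G f h m).concat (h m)

lemma mkWalk_length {V : Type*} (G : SimpleGraph V) (f : ℕ → V) (h : ∀ k, G.Adj (f k) (f (k+1)))
    (m : ℕ) : (mkWalk G f h m).length = m := by
  induction m with
  | zero => rfl
  | succ m ih => simp [mkWalk, SimpleGraph.Walk.length_concat, ih]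

lemma mkWalk_support {V : Type*} (G : SimpleGraph V) (f : ℕ → V) (h : ∀ k, G.Adj (f k) (f (k+1)))
    (m : ℕ) : (mkWalk G f h m).support = (List.range (m+1)).map f := by
  induction m with
  | zero => rfl
  | succ m ih =>
    simp [mkWalk, SimpleGraph.Walk.support_concat, ih, List.range_succ]

lemma mkWalk_edges {V : Type*} (G : SimpleGraph V) (f : ℕ → V) (h : ∀ k, G.Adj (f k) (f (k+1)))
    (m : ℕ) : (mkWalk G f h m).edges = (List.range m).map (fun k => s(f k, f (k+1))) := by
  induction m with
  | zero => rfl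
  | succ m ih =>
    simp [mkWalk, SimpleGraph.Walk.edges_concat, ih, List.range_succ]

end StairAux

open StairAux

/-- For `n ≥ 2` there are `n` pairwise vertex-disjoint cycles of length `4n` in
`C_{2n} □ C_{2n}` covering all vertices, where the `t`-th cycle passes through the
vertices `(j + 2t, j)` and `(j + 2t + 1, j)` for all `j`. -/
theorem disjoint_staircases (n : ℕ) (hn : 2 ≤ n) :
    ∃ (v : Fin n → ZMod (2 * n) × ZMod (2 * n))
      (c : (t : Fin n) → (torGrid (2 * n)).Walk (v t) (v t)),
      (∀ t, (c t).IsCycle) ∧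
      (∀ t, (c t).length = 4 * n) ∧
      (∀ t t', t ≠ t' → ∀ x, x ∈ (c t).support → x ∉ (c t').support) ∧
      (∀ x : ZMod (2 * n) × ZMod (2 * n), ∃ t, x ∈ (c t).support) ∧
      (∀ (t : Fin n) (j : ZMod (2 * n)),
        (j + 2 * (t.val : ZMod (2 * n)), j) ∈ (c t).support ∧
        (j + 2 * (t.val : ZMod (2 * n)) + 1, j) ∈ (c t).support) := by
  haveI : NeZero (2*n) := ⟨by omega⟩
  let W : (t : Fin n) → (torGrid (2*n)).Walk (stf n t.val 0) (stf n t.val 0) := fun t =>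
    (mkWalk (torGrid (2*n)) (stf n t.val) (fun k => stf_adj n hn t.val k) (4*n)).copy rfl
      (stf_period n t.val hn)
  have hsup : ∀ t, (W t).support = (List.range (4*n+1)).map (stf n t.val) := by
    intro t
    show ((mkWalk _ _ _ _).copy rfl _).support = _
    rw [SimpleGraph.Walk.support_copy, mkWalk_support]
  have hmem : ∀ t x, x ∈ (W t).support ↔ ∃ k, k < 4*n ∧ stf n t.val k = x := by
    intro t x
    rw [hsup, List.mem_map]
    constructor
    · rintro ⟨k, hk, rfl⟩
      rw [List.mem_range] at hk
      rcases Nat.lt_or_ge k (4*n) with h | h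
      · exact ⟨k, h, rfl⟩
      · have hk4 : k = 4*n := by omega
        exact ⟨0, by omega, by rw [hk4, stf_period n t.val hn]⟩
    · rintro ⟨k, hk, rfl⟩
      exact ⟨k, List.mem_range.2 (by omega), rfl⟩
  refine ⟨fun t => stf n t.val 0, W, ?_, ?_, ?_, ?_, ?_⟩
  · -- cycles
    intro t
    refine ⟨⟨⟨?_⟩, ?_⟩, ?_⟩
    · -- edges nodup
      have he : (W t).edges
          = (List.range (4*n)).map (fun k => s(stf n t.val k, stf n t.val (k+1))) := by
        show ((mkWalk _ _ _ _).copy rfl _).edges = _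
        rw [SimpleGraph.Walk.edges_copy, mkWalk_edges]
      rw [he]
      refine List.Nodup.map_on ?_ List.nodup_range
      intro k hk l hl h
      rw [List.mem_range] at hk hl
      rw [Sym2.eq_iff] at h
      rcases h with ⟨h1, _⟩ | ⟨h1, h2⟩
      · exact (stf_inj n hn t.2 t.2 hk hl h1).2
      · have c1 := (stf_eq_cases n hn t.2 t.2 (by omega) (by omega) h1).2
        have c2 := (stf_eq_cases n hn t.2 t.2 (by omega) (by omega) h2).2
        omega
    · -- ≠ nil
      intro hnil
      have hl := congrArg SimpleGraph.Walk.length hnil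
      rw [show (W t).length = 4*n from ?_] at hl
      · simp at hl; omega
      · show ((mkWalk _ _ _ _).copy rfl _).length = _
        rw [SimpleGraph.Walk.length_copy, mkWalk_length]
    · -- support tail nodup
      rw [hsup, List.range_succ_eq_map, List.map_cons, List.tail_cons, List.map_map]
      refine List.Nodup.map_on ?_ List.nodup_range
      intro k hk l hl h
      rw [List.mem_range] at hk hl
      have := (stf_eq_cases n hn t.2 t.2 (k := k+1) (l := l+1) (by omega) (by omega) h).2
      omega
  · -- length
    intro t
    show ((mkWalk _ _ _ _).copy rfl _).length = _
    rw [SimpleGraph.Walk.length_copy, mkWalk_length]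
  · -- disjoint
    intro t t' hne x hx hx'
    obtain ⟨k, hk, hxk⟩ := (hmem t x).1 hx
    obtain ⟨k', hk', hxk'⟩ := (hmem t' x).1 hx'
    have := (stf_inj n hn t.2 t'.2 hk hk' (hxk.trans hxk'.symm)).1
    exact hne (Fin.ext this)
  · -- cover
    rintro ⟨a, b⟩
    have hd : (a - b).val < 2*n := ZMod.val_lt _
    have hb : b.val < 2*n := ZMod.val_lt _
    refine ⟨⟨(a-b).val / 2, by omega⟩, (hmem _ _).2 ⟨2*b.val + (a-b).val % 2, by omega, ?_⟩⟩
    have hvd : (((a-b).val : ℕ) : ZMod (2*n)) = a - b := by simp [ZMod.natCast_val, ZMod.cast_id]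
    have hvb : ((b.val : ℕ) : ZMod (2*n)) = b := by simp [ZMod.natCast_val, ZMod.cast_id]
    simp only [stf]
    refine Prod.ext ?_ ?_
    · show ((2*((a-b).val/2) + (2*b.val + (a-b).val % 2 + 1)/2 : ℕ) : ZMod (2*n)) = a
      rw [show 2*((a-b).val/2) + (2*b.val + (a-b).val % 2 + 1)/2 = (a-b).val + b.val by omega,
        Nat.cast_add, hvd, hvb]
      ring
    · show (((2*b.val + (a-b).val % 2)/2 : ℕ) : ZMod (2*n)) = b
      rw [show (2*b.val + (a-b).val % 2)/2 = b.val by omega, hvb]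
  · -- prescribed vertices
    intro t j
    have hj : j.val < 2*n := ZMod.val_lt _
    have hvj : ((j.val : ℕ) : ZMod (2*n)) = j := by simp [ZMod.natCast_val, ZMod.cast_id]
    constructor
    · refine (hmem _ _).2 ⟨2*j.val, by omega, ?_⟩
      simp only [stf]
      refine Prod.ext ?_ ?_
      · show ((2*t.val + (2*j.val+1)/2 : ℕ) : ZMod (2*n)) = j + 2*(t.val : ZMod (2*n))
        rw [show (2*j.val+1)/2 = j.val by omega, Nat.cast_add, hvj]
        push_cast; ring
      · show ((2*j.val/2 : ℕ) : ZMod (2*n)) = j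
        rw [show 2*j.val/2 = j.val by omega, hvj]
    · refine (hmem _ _).2 ⟨2*j.val + 1, by omega, ?_⟩
      simp only [stf]
      refine Prod.ext ?_ ?_
      · show ((2*t.val + (2*j.val+1+1)/2 : ℕ) : ZMod (2*n)) = j + 2*(t.val : ZMod (2*n)) + 1
        rw [show (2*j.val+1+1)/2 = j.val + 1 by omega]
        push_cast [hvj]; ring
      · show (((2*j.val+1)/2 : ℕ) : ZMod (2*n)) = j
        rw [show (2*j.val+1)/2 = j.val by omega, hvj]
end

section
/- For every integer p ≥ 3, there are exactly two functions f from the vertex set of the sunlet graph S¹_p to itself such that (i) f(v) is adjacent to v for every vertex v, and (ii) the map sending each vertex v to the edge {v, f(v)} is a bijection from the vertex set of S¹_p onto the edge set of S¹_p; namely the function with f(inr k) = inl k and f(inl k) = inl (k+1), and the function with f(inr k) = inl k and f(inl k) = inl (k−1). -/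
lemma sunlet_adj (p : ℕ) (u v : ZMod p ⊕ ZMod p) :
    (sunlet p).Adj u v ↔ u ≠ v ∧
      ((match u, v with
        | Sum.inl a, Sum.inl b => b = a + 1
        | Sum.inl a, Sum.inr b => a = b
        | _, _ => False) ∨
       (match v, u with
        | Sum.inl a, Sum.inl b => b = a + 1
        | Sum.inl a, Sum.inr b => a = b
        | _, _ => False)) :=
  SimpleGraph.fromRel_adj _ u v

/-- For `p ≥ 3`, the sunlet `S¹_p` admits exactly two FSM orientations: functions `f`
on the vertices with `f v` adjacent to `v` such that `v ↦ {v, f v}` is a bijection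
from vertices onto edges; namely `inr k ↦ inl k, inl k ↦ inl (k+1)` and
`inr k ↦ inl k, inl k ↦ inl (k-1)`. -/
theorem sunlet_fsm_orientation_unique (p : ℕ) (hp : 3 ≤ p) :
    {f : (ZMod p ⊕ ZMod p) → (ZMod p ⊕ ZMod p) |
        (∀ v, (sunlet p).Adj (f v) v) ∧
        Set.BijOn (fun v => s(v, f v)) Set.univ (sunlet p).edgeSet} =
      {Sum.elim (fun k => Sum.inl (k + 1)) (fun k => Sum.inl k),
       Sum.elim (fun k => Sum.inl (k - 1)) (fun k => Sum.inl k)} ∧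
    (Sum.elim (fun k : ZMod p => Sum.inl (k + 1)) (fun k => Sum.inl k) :
        (ZMod p ⊕ ZMod p) → (ZMod p ⊕ ZMod p)) ≠
      Sum.elim (fun k => Sum.inl (k - 1)) (fun k => Sum.inl k) := by
  haveI : NeZero p := ⟨by omega⟩
  haveI : Fact (1 < p) := ⟨by omega⟩
  have h1 : (1 : ZMod p) ≠ 0 := one_ne_zero
  have h2 : (2 : ZMod p) ≠ 0 := by
    intro h
    rw [show (2 : ZMod p) = ((2 : ℕ) : ZMod p) by norm_num,
      ZMod.natCast_eq_zero_iff] at h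
    have := Nat.le_of_dvd (by norm_num) h
    omega
  have hcast : ∀ k : ZMod p, ∃ n : ℕ, (n : ZMod p) = k := fun k => ⟨k.val, by simp⟩
  constructor
  · ext f
    simp only [Set.mem_setOf_eq, Set.mem_insert_iff, Set.mem_singleton_iff]
    constructor
    · rintro ⟨hadj, hbij⟩
      have hinj : Function.Injective (fun v => s(v, f v)) := fun a b h =>
        hbij.injOn (Set.mem_univ a) (Set.mem_univ b) h
      -- Step 1: f (inr k) = inl k
      have hr : ∀ k : ZMod p, f (Sum.inr k) = Sum.inl k := by
        intro k
        have := hadj (Sum.inr k)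
        rw [sunlet_adj] at this
        rcases this with ⟨hne, h | h⟩
        · cases hfk : f (Sum.inr k) <;> rw [hfk] at h <;> simp_all
        · cases hfk : f (Sum.inr k) <;> rw [hfk] at h <;> simp_all
      -- Step 2: f (inl k) is inl (k+1) or inl (k-1)
      have hl : ∀ k : ZMod p, f (Sum.inl k) = Sum.inl (k + 1) ∨
          f (Sum.inl k) = Sum.inl (k - 1) := by
        intro k
        have had := hadj (Sum.inl k)
        rw [sunlet_adj] at had
        obtain ⟨hne, hrel⟩ := had
        cases hfk : f (Sum.inl k) with
        | inl a =>
          rw [hfk] at hrel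
          simp only [Sum.inl.injEq, reduceCtorEq, or_false, false_or] at hrel
          rcases hrel with h | h
          · right
            exact congrArg Sum.inl (by linear_combination -h)
          · left
            exact congrArg Sum.inl h
        | inr a =>
          exfalso
          rw [hfk] at hrel
          simp only [or_false, false_or] at hrel
          have hka : k = a := by tauto
          subst hka
          have heq : (fun v => s(v, f v)) (Sum.inl k) = (fun v => s(v, f v)) (Sum.inr k) := by
            simp only [hfk, hr k, Sym2.eq_iff]; tauto
          exact absurd (hinj heq) (by simp)
      -- Step 3: consistency of direction
      have key : ∀ k : ZMod p, f (Sum.inl k) = Sum.inl (k + 1) →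
          f (Sum.inl (k + 1)) = Sum.inl (k + 1 + 1) := by
        intro k hk
        rcases hl (k + 1) with h | h
        · exact h
        · exfalso
          have heq : (fun v => s(v, f v)) (Sum.inl k) =
              (fun v => s(v, f v)) (Sum.inl (k + 1)) := by
            simp only [hk, h, Sym2.eq_iff]
            right
            constructor
            · congr 1; ring
            · congr 1; trivial
          have := hinj heq
          simp only [Sum.inl.injEq] at this
          exact h1 (by linear_combination -this)
      have key' : ∀ k : ZMod p, f (Sum.inl k) = Sum.inl (k - 1) →
          f (Sum.inl (k - 1)) = Sum.inl (k - 1 - 1) := by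
        intro k hk
        rcases hl (k - 1) with h | h
        · exfalso
          have heq : (fun v => s(v, f v)) (Sum.inl k) =
              (fun v => s(v, f v)) (Sum.inl (k - 1)) := by
            simp only [hk, h, Sym2.eq_iff]
            right
            constructor
            · congr 1; ring
            · congr 1; trivial
          have := hinj heq
          simp only [Sum.inl.injEq] at this
          exact h1 (by linear_combination this)
        · exact h
      rcases hl 0 with h0 | h0
      · left
        have hall : ∀ n : ℕ, f (Sum.inl (n : ZMod p)) = Sum.inl ((n : ZMod p) + 1) := by
          intro n
          induction n with
          | zero => simpa using h0
          | succ n ih =>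
            have := key _ ih
            push_cast
            convert this using 3 <;> push_cast <;> ring
        funext v
        cases v with
        | inl k =>
          obtain ⟨n, rfl⟩ := hcast k
          simpa using hall n
        | inr k => simpa using hr k
      · right
        have hall : ∀ n : ℕ, f (Sum.inl (-(n : ZMod p))) = Sum.inl (-(n : ZMod p) - 1) := by
          intro n
          induction n with
          | zero => simpa using h0
          | succ n ih =>
            have := key' _ ih
            convert this using 3 <;> push_cast <;> ring
        funext v
        cases v with
        | inl k =>
          obtain ⟨n, hn⟩ := hcast (-k)
          have hk : k = -(n : ZMod p) := by rw [hn]; ring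
          rw [hk]
          simpa using hall n
        | inr k => simpa using hr k
    · have hmain : ∀ ε : ZMod p, (ε = 1 ∨ ε = -1) →
          (∀ v, (sunlet p).Adj
            (Sum.elim (fun k : ZMod p => (Sum.inl (k + ε) : ZMod p ⊕ ZMod p))
              (fun k => Sum.inl k) v) v) ∧
          Set.BijOn (fun v => s(v, Sum.elim
            (fun k : ZMod p => (Sum.inl (k + ε) : ZMod p ⊕ ZMod p))
            (fun k => Sum.inl k) v)) Set.univ (sunlet p).edgeSet := by
        intro ε hε
        have hεne : ε ≠ 0 := by rcases hε with rfl | rfl <;> simpa using h1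
        have h2ε : 2 * ε ≠ 0 := by
          rcases hε with rfl | rfl
          · simpa using h2
          · intro h; apply h2; linear_combination -h
        constructor
        · rintro (k | k)
          · rw [sunlet_adj]
            constructor
            · simp only [Sum.elim_inl, ne_eq, Sum.inl.injEq]
              intro h; exact hεne (by linear_combination h)
            · rcases hε with rfl | rfl
              · right; simp
              · left; simp only [Sum.elim_inl]; ring_nf
          · rw [sunlet_adj]
            refine ⟨by simp, Or.inl (by simp)⟩
        · refine ⟨?_, ?_, ?_⟩
          · rintro (k | k) -
            · rw [SimpleGraph.mem_edgeSet, sunlet_adj]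
              constructor
              · simp only [Sum.elim_inl, ne_eq, Sum.inl.injEq]
                intro h; exact hεne (by linear_combination -h)
              · rcases hε with rfl | rfl
                · left; simp
                · right; simp only [Sum.elim_inl]; ring_nf
            · rw [SimpleGraph.mem_edgeSet, sunlet_adj]
              refine ⟨by simp, Or.inr (by simp)⟩
          · rintro (k | k) - (j | j) - h <;>
              simp only [Sum.elim_inl, Sum.elim_inr, Sym2.eq_iff, Sum.inl.injEq,
                Sum.inr.injEq, reduceCtorEq, and_self, false_and, and_false, or_self,
                false_or, or_false] at h
            · rcases h with ⟨rfl, -⟩ | ⟨h1', h2'⟩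
              · rfl
              · exfalso; exact h2ε (by linear_combination h2' - h1')
            · simp [h]
          · intro e
            induction e using Sym2.ind with
            | _ a b =>
              intro he
              rw [SimpleGraph.mem_edgeSet, sunlet_adj] at he
              obtain ⟨hne, hrel⟩ := he
              rcases a with a | a <;> rcases b with b | b <;>
                simp only [Sum.inl.injEq, Sum.inr.injEq, or_false, false_or, or_self] at hrel
              · rcases hε with rfl | rfl
                · rcases hrel with rfl | rfl
                  · exact ⟨Sum.inl a, Set.mem_univ _, by simp [Sym2.eq_iff]⟩
                  · exact ⟨Sum.inl b, Set.mem_univ _, by simp [Sym2.eq_iff]⟩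
                · rcases hrel with rfl | rfl
                  · refine ⟨Sum.inl (a + 1), Set.mem_univ _, ?_⟩
                    simp only [Sum.elim_inl, Sym2.eq_iff, Sum.inl.injEq]
                    right; constructor <;> simp
                  · refine ⟨Sum.inl (b + 1), Set.mem_univ _, ?_⟩
                    simp only [Sum.elim_inl, Sym2.eq_iff, Sum.inl.injEq]
                    left; constructor <;> simp
              · refine ⟨Sum.inr b, Set.mem_univ _, ?_⟩
                rw [hrel]
                exact Sym2.eq_swap
              · refine ⟨Sum.inr a, Set.mem_univ _, ?_⟩
                rw [hrel]
                rfl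
      rintro (rfl | rfl)
      · exact hmain 1 (Or.inl rfl)
      · have hfun : (Sum.elim (fun k : ZMod p => (Sum.inl (k - 1) : ZMod p ⊕ ZMod p))
            (fun k => Sum.inl k)) =
            Sum.elim (fun k => Sum.inl (k + -1)) (fun k => Sum.inl k) := by
          funext v; cases v <;> simp [sub_eq_add_neg]
        rw [hfun]
        exact hmain (-1) (Or.inr rfl)
  · intro h
    have := congrFun h (Sum.inl 0)
    simp only [Sum.elim_inl, Sum.inl.injEq, zero_add, zero_sub] at this
    apply h2
    linear_combination this
end
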